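/- arXiv:math/0612365 — 7 statements merged into one kernel-verified Lean document; each statement's English description precedes it below -/
import Mathlib

section
/- For every n ≥ 1, all indices 1 ≤ i ≤ m ≤ n and 1 ≤ i′ ≤ m′ ≤ n, all z, w ∈ ℂ, and every B ∈ Matₙ(ℂ): φ_{m,i}(z)(φ_{m′,i′}(w)(B)) = φ_{m′,i′}(w)(φ_{m,i}(z)(B)). That is, the Gelfand–Zeitlin flows on Matₙ(ℂ) pairwise commute, so that composing them defines an action of the abelian group ℂ^{n(n+1)/2} on Matₙ(ℂ). -/
open Matrix

noncomputable section

/-- Upper-left `m × m` submatrix of an `n × n` matrix. -/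
def ulMinor {n : ℕ} (m : ℕ) (hm : m ≤ n) (B : Matrix (Fin n) (Fin n) ℂ) :
    Matrix (Fin m) (Fin m) ℂ :=
  fun i j => B (Fin.castLE hm i) (Fin.castLE hm j)

/-- The embedding `ι_m` of `m × m` matrices into `n × n` matrices, placing the matrix in
the upper-left block and zeros elsewhere. -/
def iotaEmb {m : ℕ} (n : ℕ) (X : Matrix (Fin m) (Fin m) ℂ) : Matrix (Fin n) (Fin n) ℂ :=
  fun i j => if hi : (i : ℕ) < m then
    (if hj : (j : ℕ) < m then X ⟨i, hi⟩ ⟨j, hj⟩ else 0) else 0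

/-- The Gelfand–Zeitlin flow `φ_{m,i}(z)(B) = exp(z ι_m((B_(m))^(i-1))) B exp(-z ι_m((B_(m))^(i-1)))`. -/
def gzFlow {n : ℕ} (m i : ℕ) (hm : m ≤ n) (z : ℂ) (B : Matrix (Fin n) (Fin n) ℂ) :
    Matrix (Fin n) (Fin n) ℂ :=
  NormedSpace.exp (z • iotaEmb n ((ulMinor m hm B) ^ (i - 1))) * B *
    NormedSpace.exp ((-z) • iotaEmb n ((ulMinor m hm B) ^ (i - 1)))

namespace GZ

open NormedSpace Nat

attribute [local instance] Matrix.linftyOpNormedRing Matrix.linftyOpNormedAlgebra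

variable {m m' n : ℕ}

lemma sum_fin_eq (hmn : m ≤ n) (F : Fin n → ℂ) (hF : ∀ k : Fin n, ¬((k:ℕ) < m) → F k = 0) :
    ∑ k : Fin n, F k = ∑ k : Fin m, F (Fin.castLE hmn k) := by
  have h1 : ∑ k : Fin n, F k = ∑ k ∈ Finset.univ.map (Fin.castLEEmb hmn), F k := by
    refine (Finset.sum_subset (Finset.subset_univ _) fun x _ hx => hF x fun hlt => ?_).symm
    exact hx (Finset.mem_map.mpr ⟨⟨x, hlt⟩, Finset.mem_univ _, Fin.ext rfl⟩)
  rw [h1, Finset.sum_map]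
  rfl

lemma iotaEmb_add (X Y : Matrix (Fin m) (Fin m) ℂ) :
    iotaEmb n (X + Y) = iotaEmb n X + iotaEmb n Y := by
  ext i j
  by_cases hi : (i:ℕ) < m <;> by_cases hj : (j:ℕ) < m <;> simp [iotaEmb, hi, hj]

lemma iotaEmb_smul (c : ℂ) (X : Matrix (Fin m) (Fin m) ℂ) :
    iotaEmb n (c • X) = c • iotaEmb n X := by
  ext i j
  by_cases hi : (i:ℕ) < m <;> by_cases hj : (j:ℕ) < m <;> simp [iotaEmb, hi, hj]

lemma iotaEmb_mul (hmn : m ≤ n) (X Y : Matrix (Fin m) (Fin m) ℂ) :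
    iotaEmb n X * iotaEmb n Y = iotaEmb n (X * Y) := by
  ext i j
  by_cases hi : (i:ℕ) < m
  · by_cases hj : (j:ℕ) < m
    · have hr : iotaEmb n (X * Y) i j = ∑ k : Fin m, X ⟨i,hi⟩ k * Y k ⟨j,hj⟩ := by
        simp [iotaEmb, hi, hj, Matrix.mul_apply]
      rw [Matrix.mul_apply, hr,
        sum_fin_eq hmn _ (fun k hk => by simp [iotaEmb, hk])]
      refine Finset.sum_congr rfl fun k _ => ?_
      simp [iotaEmb, hi, hj, k.isLt]
    · have hr : iotaEmb n (X * Y) i j = 0 := by simp [iotaEmb, hj]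
      rw [Matrix.mul_apply, hr]
      exact Finset.sum_eq_zero fun k _ => by simp [iotaEmb, hj]
  · have hr : iotaEmb n (X * Y) i j = 0 := by simp [iotaEmb, hi]
    rw [Matrix.mul_apply, hr]
    exact Finset.sum_eq_zero fun k _ => by simp [iotaEmb, hi]

lemma iotaEmb_pow (hmn : m ≤ n) (X : Matrix (Fin m) (Fin m) ℂ) (k : ℕ) :
    iotaEmb n (X ^ (k+1)) = (iotaEmb n X) ^ (k+1) := by
  induction k with
  | zero => simp
  | succ k ih => rw [pow_succ X (k+1), ← iotaEmb_mul hmn, ih, ← pow_succ]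

/-- `iotaEmb` as a continuous linear map. -/
def iotaCLM (m n : ℕ) : Matrix (Fin m) (Fin m) ℂ →L[ℂ] Matrix (Fin n) (Fin n) ℂ :=
  LinearMap.toContinuousLinearMap ⟨⟨iotaEmb n, iotaEmb_add⟩, iotaEmb_smul⟩

lemma iotaCLM_apply (X : Matrix (Fin m) (Fin m) ℂ) : iotaCLM m n X = iotaEmb n X := rfl

set_option maxHeartbeats 1000000 in
lemma exp_iotaEmb (hmn : m ≤ n) (A : Matrix (Fin m) (Fin m) ℂ) :
    exp (iotaEmb n A) = 1 + iotaEmb n (exp A - 1) := by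
  have hs1 : Summable (fun k : ℕ => (k !⁻¹ : ℂ) • (iotaEmb n A) ^ k) := expSeries_summable' _
  have hs2 : Summable (fun k : ℕ => (k !⁻¹ : ℂ) • A ^ k) := expSeries_summable' _
  have hs3 : Summable (fun k : ℕ => ((k+1)!⁻¹ : ℂ) • A ^ (k+1)) :=
    (summable_nat_add_iff 1).mpr hs2
  rw [exp_eq_tsum (𝕂 := ℂ)]
  beta_reduce
  rw [Summable.tsum_eq_zero_add hs1]
  have e1 : ∀ k : ℕ, ((k+1)!⁻¹ : ℂ) • (iotaEmb n A) ^ (k+1)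
      = iotaCLM m n (((k+1)!⁻¹ : ℂ) • A ^ (k+1)) := by
    intro k
    rw [_root_.map_smul, iotaCLM_apply, ← iotaEmb_pow hmn]
  simp only [e1]
  rw [← (iotaCLM m n).map_tsum hs3]
  have e2 : (∑' k : ℕ, ((k+1)!⁻¹ : ℂ) • A ^ (k+1)) = exp A - 1 := by
    have h := Summable.tsum_eq_zero_add hs2
    rw [exp_eq_tsum (𝕂 := ℂ)]
    beta_reduce
    rw [h]
    simp
  rw [e2]
  simp [iotaCLM_apply]

lemma ulMinor_one (h : m' ≤ n) : ulMinor m' h (1 : Matrix (Fin n) (Fin n) ℂ) = 1 := by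
  ext i j
  simp [ulMinor, Matrix.one_apply, Fin.castLE_inj]

lemma ulMinor_one_add_iotaEmb (h : m' ≤ n) (S : Matrix (Fin m') (Fin m') ℂ) :
    ulMinor m' h (1 + iotaEmb n S) = 1 + S := by
  ext i j
  have hi : ((Fin.castLE h i : Fin n) : ℕ) < m' := i.isLt
  have hj : ((Fin.castLE h j : Fin n) : ℕ) < m' := j.isLt
  simp [ulMinor, Matrix.add_apply, iotaEmb, hi, hj, Matrix.one_apply, Fin.castLE_inj]

lemma ulMinor_mul_left (h : m' ≤ n) (S C : Matrix (Fin n) (Fin n) ℂ)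
    (hS : ∀ i k : Fin n, (i:ℕ) < m' → ¬((k:ℕ) < m') → S i k = 0) :
    ulMinor m' h (S * C) = ulMinor m' h S * ulMinor m' h C := by
  ext i j
  show (S * C) _ _ = _
  rw [Matrix.mul_apply,
    sum_fin_eq h _ (fun k hk => by rw [hS _ k i.isLt hk, zero_mul])]
  rfl

lemma ulMinor_mul_right (h : m' ≤ n) (C T : Matrix (Fin n) (Fin n) ℂ)
    (hT : ∀ k j : Fin n, ¬((k:ℕ) < m') → (j:ℕ) < m' → T k j = 0) :
    ulMinor m' h (C * T) = ulMinor m' h C * ulMinor m' h T := by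
  ext i j
  show (C * T) _ _ = _
  rw [Matrix.mul_apply,
    sum_fin_eq h _ (fun k hk => by rw [hT k _ hk j.isLt, mul_zero])]
  rfl

lemma blk₁ (S : Matrix (Fin m') (Fin m') ℂ) :
    ∀ i k : Fin n, (i:ℕ) < m' → ¬((k:ℕ) < m') → (1 + iotaEmb n S) i k = 0 := by
  intro i k hi hk
  have hne : i ≠ k := fun e => hk (e ▸ hi)
  simp [Matrix.add_apply, iotaEmb, hk, Matrix.one_apply, hne]

lemma blk₂ (S : Matrix (Fin m') (Fin m') ℂ) :
    ∀ k j : Fin n, ¬((k:ℕ) < m') → (j:ℕ) < m' → (1 + iotaEmb n S) k j = 0 := by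
  intro k j hk hj
  have hne : k ≠ j := fun e => hk (e ▸ hj)
  simp [Matrix.add_apply, iotaEmb, hk, Matrix.one_apply, hne]

lemma ulMinor_conj (h : m' ≤ n) (S T : Matrix (Fin m') (Fin m') ℂ)
    (C : Matrix (Fin n) (Fin n) ℂ) :
    ulMinor m' h ((1 + iotaEmb n S) * C * (1 + iotaEmb n T))
      = (1 + S) * ulMinor m' h C * (1 + T) := by
  rw [ulMinor_mul_right h _ _ (blk₂ T), ulMinor_mul_left h _ _ (blk₁ S),
    ulMinor_one_add_iotaEmb, ulMinor_one_add_iotaEmb]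

lemma iotaEmb_iotaEmb (hmm' : m ≤ m') (X : Matrix (Fin m) (Fin m) ℂ) :
    iotaEmb n (iotaEmb m' X) = iotaEmb n X := by
  ext i j
  by_cases him : (i:ℕ) < m
  · by_cases hjm : (j:ℕ) < m
    · have hi' : (i:ℕ) < m' := lt_of_lt_of_le him hmm'
      have hj' : (j:ℕ) < m' := lt_of_lt_of_le hjm hmm'
      simp [iotaEmb, him, hjm, hi', hj']
    · by_cases hj' : (j:ℕ) < m' <;> simp [iotaEmb, hjm, hj']
  · by_cases hi' : (i:ℕ) < m' <;> simp [iotaEmb, him, hi']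

lemma gz_conj_pow {N : ℕ} {g h C : Matrix (Fin N) (Fin N) ℂ}
    (hgh : g * h = 1) (hhg : h * g = 1) (k : ℕ) :
    (g * C * h) ^ k = g * C ^ k * h := by
  induction k with
  | zero => rw [pow_zero, pow_zero, mul_one, hgh]
  | succ k ih =>
      rw [pow_succ, ih, pow_succ]
      simp only [mul_assoc]
      rw [← mul_assoc h g (C * h), hhg, one_mul]

lemma gz_conj_mul {N : ℕ} {g h : Matrix (Fin N) (Fin N) ℂ} (hhg : h * g = 1)
    (P Q : Matrix (Fin N) (Fin N) ℂ) :
    (g * P * h) * (g * Q * h) = g * (P * Q) * h := by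
  simp only [mul_assoc]
  rw [← mul_assoc h g (Q * h), hhg, one_mul]

lemma exp_cancel (N : ℕ) (z : ℂ) (A : Matrix (Fin N) (Fin N) ℂ) :
    exp (z • A) * exp ((-z) • A) = 1 := by
  rw [← Matrix.exp_add_of_commute _ _ (((Commute.refl A).smul_left z).smul_right (-z)),
    ← add_smul, add_neg_cancel, zero_smul, exp_zero]

lemma exp_cancel' (N : ℕ) (z : ℂ) (A : Matrix (Fin N) (Fin N) ℂ) :
    exp ((-z) • A) * exp (z • A) = 1 := by
  have := exp_cancel N (-z) A
  rwa [neg_neg] at this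

lemma commute_exp_smul_pow (N : ℕ) (w : ℂ) (C : Matrix (Fin N) (Fin N) ℂ) (k : ℕ) :
    exp (w • C ^ k) * C = C * exp (w • C ^ k) :=
  ((((Commute.refl C).pow_left k).smul_left w).exp_left).eq

lemma key {n : ℕ} (m i m' i' : ℕ) (hm : m ≤ n) (hm' : m' ≤ n) (hmm' : m ≤ m')
    (z w : ℂ) (B : Matrix (Fin n) (Fin n) ℂ) :
    gzFlow m i hm z (gzFlow m' i' hm' w B) = gzFlow m' i' hm' w (gzFlow m i hm z B) := by
  simp only [gzFlow]
  set X : Matrix (Fin m) (Fin m) ℂ := (ulMinor m hm B) ^ (i - 1) with hX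
  set Y : Matrix (Fin m') (Fin m') ℂ := (ulMinor m' hm' B) ^ (i' - 1) with hY
  set g := exp (z • iotaEmb n X) with hgdef
  set g' := exp ((-z) • iotaEmb n X) with hg'def
  set E := exp (w • iotaEmb n Y) with hEdef
  set E' := exp ((-w) • iotaEmb n Y) with hE'def
  set h1 : Matrix (Fin m') (Fin m') ℂ := exp (z • iotaEmb m' X) with hh1
  set h2 : Matrix (Fin m') (Fin m') ℂ := exp ((-z) • iotaEmb m' X) with hh2
  set eY : Matrix (Fin m') (Fin m') ℂ := exp (w • Y) with heY
  set eY' : Matrix (Fin m') (Fin m') ℂ := exp ((-w) • Y) with heY'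
  have hgg' : g * g' = 1 := exp_cancel n z _
  have hg'g : g' * g = 1 := exp_cancel' n z _
  have hh12 : h1 * h2 = 1 := exp_cancel m' z _
  have hh21 : h2 * h1 = 1 := exp_cancel' m' z _
  have heYeY' : eY * eY' = 1 := exp_cancel m' w _
  have hgform : g = 1 + iotaEmb n (h1 - 1) := by
    rw [hgdef, show z • iotaEmb n X = iotaEmb n (z • iotaEmb m' X) by
      rw [iotaEmb_smul, iotaEmb_iotaEmb hmm'], exp_iotaEmb hm']
  have hg'form : g' = 1 + iotaEmb n (h2 - 1) := by
    rw [hg'def, show (-z) • iotaEmb n X = iotaEmb n ((-z) • iotaEmb m' X) by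
      rw [iotaEmb_smul, iotaEmb_iotaEmb hmm'], exp_iotaEmb hm']
  have hEform : E = 1 + iotaEmb n (eY - 1) := by
    rw [hEdef, show w • iotaEmb n Y = iotaEmb n (w • Y) from (iotaEmb_smul _ _).symm,
      exp_iotaEmb hm']
  have hE'form : E' = 1 + iotaEmb n (eY' - 1) := by
    rw [hE'def, show (-w) • iotaEmb n Y = iotaEmb n ((-w) • Y) from (iotaEmb_smul _ _).symm,
      exp_iotaEmb hm']
  have e1 : ∀ S : Matrix (Fin m') (Fin m') ℂ, (1 : Matrix (Fin m') (Fin m') ℂ) + (S - 1) = S :=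
    fun S => by abel
  have hminor1 : ulMinor m' hm' (E * B * E') = ulMinor m' hm' B := by
    rw [hEform, hE'form, ulMinor_conj hm', e1, e1]
    have hcomm : eY * ulMinor m' hm' B = ulMinor m' hm' B * eY := by
      rw [heY, hY]; exact commute_exp_smul_pow m' w _ _
    rw [hcomm, mul_assoc, heYeY', mul_one]
  have hminor2 : ulMinor m hm (E * B * E') = ulMinor m hm B := by
    have l : ∀ C : Matrix (Fin n) (Fin n) ℂ,
        ulMinor m hm C = ulMinor m hmm' (ulMinor m' hm' C) := fun C => rfl
    rw [l, hminor1, ← l]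
  have hminor3 : ulMinor m' hm' (g * B * g') = h1 * ulMinor m' hm' B * h2 := by
    rw [hgform, hg'form, ulMinor_conj hm', e1, e1]
  have hiota : iotaEmb n (h1 * Y * h2) = g * iotaEmb n Y * g' := by
    rw [hgform, hg'form]
    rw [add_mul, one_mul, iotaEmb_mul hm', ← iotaEmb_add, mul_add, mul_one,
      iotaEmb_mul hm', ← iotaEmb_add]
    refine congrArg (iotaEmb n) ?_
    noncomm_ring
  have hsmul : ∀ c : ℂ, c • (g * iotaEmb n Y * g') = g * (c • iotaEmb n Y) * g' := by
    intro c
    rw [← smul_mul_assoc, ← mul_smul_comm]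
  set U : (Matrix (Fin n) (Fin n) ℂ)ˣ := ⟨g, g', hgg', hg'g⟩ with hU
  have hexpconj : ∀ A : Matrix (Fin n) (Fin n) ℂ,
      exp (g * A * g') = g * exp A * g' := fun A => Matrix.exp_units_conj U A
  rw [hminor2, ← hX, hminor3, gz_conj_pow hh12 hh21, ← hY, hiota, hsmul, hsmul,
    hexpconj, hexpconj, ← hEdef, ← hE'def, ← hgdef, ← hg'def,
    gz_conj_mul hg'g, gz_conj_mul hg'g]

end GZ

/-- The Gelfand–Zeitlin flows on `Matₙ(ℂ)` pairwise commute. -/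
theorem gz_flows_commute (n : ℕ) (hn : 1 ≤ n)
    (m i m' i' : ℕ) (hi1 : 1 ≤ i) (him : i ≤ m) (hm : m ≤ n)
    (hi1' : 1 ≤ i') (him' : i' ≤ m') (hm' : m' ≤ n)
    (z w : ℂ) (B : Matrix (Fin n) (Fin n) ℂ) :
    gzFlow m i hm z (gzFlow m' i' hm' w B) = gzFlow m' i' hm' w (gzFlow m i hm z B) := by
  rcases le_total m m' with h | h
  · exact GZ.key m i m' i' hm hm' h z w B
  · exact (GZ.key m' i' m i hm' hm h w z B).symm
end
end

section
/- For every n ≥ 1, 1 ≤ i ≤ m ≤ n, all z, w ∈ ℂ and every B ∈ Matₙ(ℂ): φ_{m,i}(z+w)(B) = φ_{m,i}(z)(φ_{m,i}(w)(B)), and φ_{m,i}(0)(B) = B. That is, each Gelfand–Zeitlin flow φ_{m,i} is an action of the additive group ℂ on Matₙ(ℂ). -/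
open Matrix

noncomputable section

namespace GZaux

variable {m n : ℕ}

lemma sum_fin_lt (hm : m ≤ n) (f : Fin n → ℂ) (hf : ∀ k : Fin n, ¬((k : ℕ) < m) → f k = 0) :
    ∑ k, f k = ∑ j : Fin m, f (Fin.castLE hm j) := by
  classical
  simp only [← Fin.castLEEmb_apply hm]
  rw [← Finset.sum_map Finset.univ (Fin.castLEEmb hm) f]
  refine (Finset.sum_subset (Finset.subset_univ _) ?_).symm
  intro k _ hk
  refine hf k fun hlt => hk ?_
  simp only [Finset.mem_map, Finset.mem_univ, true_and]
  exact ⟨⟨(k : ℕ), hlt⟩, by ext; simp⟩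

/-- `iotaEmb` as a linear map. -/
def iotaL (m n : ℕ) : Matrix (Fin m) (Fin m) ℂ →ₗ[ℂ] Matrix (Fin n) (Fin n) ℂ where
  toFun := iotaEmb n
  map_add' X Y := by
    funext i j
    simp only [iotaEmb, Matrix.add_apply]
    split_ifs <;> simp
  map_smul' c X := by
    funext i j
    simp only [iotaEmb, Matrix.smul_apply, RingHom.id_apply]
    split_ifs <;> simp

lemma iotaEmb_smul (c : ℂ) (X : Matrix (Fin m) (Fin m) ℂ) :
    iotaEmb n (c • X) = c • iotaEmb n X :=
  (iotaL m n).map_smul c X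

lemma iotaEmb_zero_of_ge (X : Matrix (Fin m) (Fin m) ℂ) (i k : Fin n) (h : ¬((i : ℕ) < m)) :
    iotaEmb n X i k = 0 := by
  simp [iotaEmb, h]

lemma iotaEmb_zero_of_ge' (X : Matrix (Fin m) (Fin m) ℂ) (i k : Fin n) (h : ¬((k : ℕ) < m)) :
    iotaEmb n X i k = 0 := by
  simp only [iotaEmb]
  split_ifs <;> simp_all

lemma iotaEmb_castLE (hm : m ≤ n) (X : Matrix (Fin m) (Fin m) ℂ) (i j : Fin m) :
    iotaEmb n X (Fin.castLE hm i) (Fin.castLE hm j) = X i j := by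
  simp [iotaEmb]

lemma ulMinor_iotaEmb (hm : m ≤ n) (X : Matrix (Fin m) (Fin m) ℂ) :
    ulMinor m hm (iotaEmb n X) = X := by
  funext i j
  simp [ulMinor, iotaEmb_castLE hm]

lemma iotaEmb_mul (hm : m ≤ n) (X Y : Matrix (Fin m) (Fin m) ℂ) :
    iotaEmb n X * iotaEmb n Y = iotaEmb n (X * Y) := by
  funext i j
  rw [Matrix.mul_apply]
  by_cases hi : (i : ℕ) < m
  · by_cases hj : (j : ℕ) < m
    · have hij : i = Fin.castLE hm ⟨(i : ℕ), hi⟩ := by ext; rfl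
      have hjj : j = Fin.castLE hm ⟨(j : ℕ), hj⟩ := by ext; rfl
      rw [hij, hjj, iotaEmb_castLE hm, Matrix.mul_apply]
      rw [sum_fin_lt hm _ (fun k hk => by rw [iotaEmb_zero_of_ge' _ _ _ hk, zero_mul])]
      refine Finset.sum_congr rfl fun k _ => ?_
      rw [iotaEmb_castLE hm, iotaEmb_castLE hm]
    · rw [iotaEmb_zero_of_ge' _ _ _ hj]
      exact Finset.sum_eq_zero fun k _ => by rw [iotaEmb_zero_of_ge' _ _ _ hj, mul_zero]
  · rw [iotaEmb_zero_of_ge _ _ _ hi]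
    exact Finset.sum_eq_zero fun k _ => by rw [iotaEmb_zero_of_ge _ _ _ hi, zero_mul]

lemma iotaEmb_pow_succ (hm : m ≤ n) (X : Matrix (Fin m) (Fin m) ℂ) (k : ℕ) :
    (iotaEmb n X) ^ (k + 1) = iotaEmb n (X ^ (k + 1)) := by
  induction k with
  | zero => simp
  | succ k ih =>
    rw [pow_succ, ih, iotaEmb_mul hm, ← pow_succ]

lemma ulMinor_add (hm : m ≤ n) (A B : Matrix (Fin n) (Fin n) ℂ) :
    ulMinor m hm (A + B) = ulMinor m hm A + ulMinor m hm B := rfl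

lemma ulMinor_iota_mul (hm : m ≤ n) (S : Matrix (Fin m) (Fin m) ℂ)
    (B : Matrix (Fin n) (Fin n) ℂ) :
    ulMinor m hm (iotaEmb n S * B) = S * ulMinor m hm B := by
  funext i j
  show (iotaEmb n S * B) (Fin.castLE hm i) (Fin.castLE hm j) = _
  rw [Matrix.mul_apply, Matrix.mul_apply,
    sum_fin_lt hm _ (fun k hk => by rw [iotaEmb_zero_of_ge' _ _ _ hk, zero_mul])]
  exact Finset.sum_congr rfl fun k _ => by rw [iotaEmb_castLE hm]; rfl

lemma ulMinor_mul_iota (hm : m ≤ n) (T : Matrix (Fin m) (Fin m) ℂ)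
    (B : Matrix (Fin n) (Fin n) ℂ) :
    ulMinor m hm (B * iotaEmb n T) = ulMinor m hm B * T := by
  funext i j
  show (B * iotaEmb n T) (Fin.castLE hm i) (Fin.castLE hm j) = _
  rw [Matrix.mul_apply, Matrix.mul_apply,
    sum_fin_lt hm _ (fun k hk => by rw [iotaEmb_zero_of_ge _ _ _ hk, mul_zero])]
  exact Finset.sum_congr rfl fun k _ => by rw [iotaEmb_castLE hm]; rfl

/-- The key structural fact: the exponential of an embedded matrix is
`1 + ι(exp Z - 1)`. -/
lemma exp_iotaEmb (hm : m ≤ n) (Z : Matrix (Fin m) (Fin m) ℂ) :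
    NormedSpace.exp (iotaEmb n Z) = 1 + iotaEmb n (NormedSpace.exp Z - 1) := by
  classical
  letI : SeminormedRing (Matrix (Fin m) (Fin m) ℂ) := Matrix.linftyOpSemiNormedRing
  letI : NormedRing (Matrix (Fin m) (Fin m) ℂ) := Matrix.linftyOpNormedRing
  letI : NormedAlgebra ℂ (Matrix (Fin m) (Fin m) ℂ) := Matrix.linftyOpNormedAlgebra
  letI : SeminormedRing (Matrix (Fin n) (Fin n) ℂ) := Matrix.linftyOpSemiNormedRing
  letI : NormedRing (Matrix (Fin n) (Fin n) ℂ) := Matrix.linftyOpNormedRing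
  letI : NormedAlgebra ℂ (Matrix (Fin n) (Fin n) ℂ) := Matrix.linftyOpNormedAlgebra
  have h1 : HasSum (fun k : ℕ => (((Nat.factorial k : ℕ) : ℂ)⁻¹) • Z ^ k) (NormedSpace.exp Z) :=
    NormedSpace.exp_series_hasSum_exp' Z
  have h2 : HasSum (fun k : ℕ => (((Nat.factorial k : ℕ) : ℂ)⁻¹) • iotaEmb n (Z ^ k))
      (iotaEmb n (NormedSpace.exp Z)) := by
    have := (LinearMap.toContinuousLinearMap (iotaL m n)).hasSum h1
    simp at this; exact this
  have h3 := h2.update 0 (1 : Matrix (Fin n) (Fin n) ℂ)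
  have heq : Function.update (fun k : ℕ => (((Nat.factorial k : ℕ) : ℂ)⁻¹) • iotaEmb n (Z ^ k)) 0
      (1 : Matrix (Fin n) (Fin n) ℂ)
      = fun k : ℕ => (((Nat.factorial k : ℕ) : ℂ)⁻¹) • (iotaEmb n Z) ^ k := by
    funext k
    cases k with
    | zero => simp
    | succ k =>
      rw [Function.update_of_ne (Nat.succ_ne_zero k), iotaEmb_pow_succ hm]
  rw [heq] at h3
  have h4 : HasSum (fun k : ℕ => (((Nat.factorial k : ℕ) : ℂ)⁻¹) • (iotaEmb n Z) ^ k)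
      (NormedSpace.exp (iotaEmb n Z)) := NormedSpace.exp_series_hasSum_exp' _
  have := h4.unique h3
  rw [this]
  have : iotaEmb n (NormedSpace.exp Z - 1)
      = iotaEmb n (NormedSpace.exp Z) - iotaEmb n (1 : Matrix (Fin m) (Fin m) ℂ) :=
    (iotaL m n).map_sub _ _
  rw [this]
  simp only [Nat.factorial_zero, Nat.cast_one, inv_one, pow_zero, one_smul]
  abel

lemma ulMinor_exp_conj (hm : m ≤ n) (C : Matrix (Fin m) (Fin m) ℂ) (c d : ℂ)
    (B : Matrix (Fin n) (Fin n) ℂ) :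
    ulMinor m hm (NormedSpace.exp (c • iotaEmb n C) * B * NormedSpace.exp (d • iotaEmb n C))
      = NormedSpace.exp (c • C) * ulMinor m hm B * NormedSpace.exp (d • C) := by
  rw [← iotaEmb_smul, ← iotaEmb_smul, exp_iotaEmb hm, exp_iotaEmb hm]
  set S := NormedSpace.exp (c • C) - 1 with hS
  set T := NormedSpace.exp (d • C) - 1 with hT
  have hexpand : (1 + iotaEmb n S) * B * (1 + iotaEmb n T)
      = B + iotaEmb n S * B + (B * iotaEmb n T + iotaEmb n S * B * iotaEmb n T) := by
    noncomm_ring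
  have h3 : ulMinor m hm (iotaEmb n S * B * iotaEmb n T)
      = S * ulMinor m hm B * T := by
    rw [ulMinor_mul_iota hm, ulMinor_iota_mul hm]
  rw [hexpand, ulMinor_add, ulMinor_add, ulMinor_add, ulMinor_iota_mul hm,
    ulMinor_mul_iota hm, h3]
  have hc : NormedSpace.exp (c • C) = 1 + S := by rw [hS]; abel
  have hd : NormedSpace.exp (d • C) = 1 + T := by rw [hT]; abel
  rw [hc, hd]
  noncomm_ring

end GZaux

/-- Each Gelfand–Zeitlin flow `φ_{m,i}` is an action of the additive group `ℂ` on `Matₙ(ℂ)`. -/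
theorem gz_flow_one_parameter_group (n : ℕ) (hn : 1 ≤ n)
    (m i : ℕ) (hi1 : 1 ≤ i) (him : i ≤ m) (hm : m ≤ n)
    (z w : ℂ) (B : Matrix (Fin n) (Fin n) ℂ) :
    gzFlow m i hm (z + w) B = gzFlow m i hm z (gzFlow m i hm w B) ∧
      gzFlow m i hm 0 B = B := by
  constructor
  · set A := ulMinor m hm B with hA
    set C := A ^ (i - 1) with hC
    set X := iotaEmb n C with hX
    have hmin : ulMinor m hm (gzFlow m i hm w B)
        = NormedSpace.exp (w • C) * A * NormedSpace.exp ((-w) • C) :=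
      GZaux.ulMinor_exp_conj hm C w (-w) B
    have hcomm : Commute (w • C) ((-w) • C) := ((Commute.refl C).smul_left w).smul_right (-w)
    have hinv1 : NormedSpace.exp (w • C) * NormedSpace.exp ((-w) • C) = 1 := by
      rw [← Matrix.exp_add_of_commute _ _ hcomm]
      simp
    have hinv2 : NormedSpace.exp ((-w) • C) * NormedSpace.exp (w • C) = 1 := by
      rw [← Matrix.exp_add_of_commute _ _ hcomm.symm]
      simp
    have hconjpow : ∀ k : ℕ,
        (NormedSpace.exp (w • C) * A * NormedSpace.exp ((-w) • C)) ^ k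
          = NormedSpace.exp (w • C) * A ^ k * NormedSpace.exp ((-w) • C) := by
      intro k
      induction k with
      | zero => simpa using hinv1.symm
      | succ k ih =>
        rw [pow_succ, ih, pow_succ]
        calc NormedSpace.exp (w • C) * A ^ k * NormedSpace.exp ((-w) • C) *
              (NormedSpace.exp (w • C) * A * NormedSpace.exp ((-w) • C))
            = NormedSpace.exp (w • C) * A ^ k *
              (NormedSpace.exp ((-w) • C) * NormedSpace.exp (w • C)) *
              (A * NormedSpace.exp ((-w) • C)) := by noncomm_ring
          _ = NormedSpace.exp (w • C) * (A ^ k * A) * NormedSpace.exp ((-w) • C) := by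
              rw [hinv2]; noncomm_ring
    have hcC : Commute C (NormedSpace.exp (w • C)) :=
      ((Commute.refl C).smul_right w).exp_right
    have hpow : (ulMinor m hm (gzFlow m i hm w B)) ^ (i - 1) = C := by
      rw [hmin, hconjpow, ← hC]
      calc NormedSpace.exp (w • C) * C * NormedSpace.exp ((-w) • C)
          = C * (NormedSpace.exp (w • C) * NormedSpace.exp ((-w) • C)) := by
            rw [← hcC.eq]; noncomm_ring
        _ = C := by rw [hinv1, mul_one]
    have hXadd : ∀ a b : ℂ,
        NormedSpace.exp (a • X) * NormedSpace.exp (b • X)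
          = NormedSpace.exp ((a + b) • X) := by
      intro a b
      rw [add_smul,
        Matrix.exp_add_of_commute _ _ (((Commute.refl X).smul_left a).smul_right b)]
    show NormedSpace.exp ((z + w) • X) * B * NormedSpace.exp ((-(z + w)) • X)
        = NormedSpace.exp (z • iotaEmb n ((ulMinor m hm (gzFlow m i hm w B)) ^ (i - 1))) *
            (NormedSpace.exp (w • X) * B * NormedSpace.exp ((-w) • X)) *
            NormedSpace.exp ((-z) • iotaEmb n ((ulMinor m hm (gzFlow m i hm w B)) ^ (i - 1)))
    rw [hpow, ← hX]
    calc NormedSpace.exp ((z + w) • X) * B * NormedSpace.exp ((-(z + w)) • X)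
        = NormedSpace.exp ((z + w) • X) * B * NormedSpace.exp ((-w + -z) • X) := by
          ring_nf
      _ = (NormedSpace.exp (z • X) * NormedSpace.exp (w • X)) * B *
            (NormedSpace.exp ((-w) • X) * NormedSpace.exp ((-z) • X)) := by
          rw [hXadd, hXadd]
      _ = NormedSpace.exp (z • X) *
            (NormedSpace.exp (w • X) * B * NormedSpace.exp ((-w) • X)) *
            NormedSpace.exp ((-z) • X) := by noncomm_ring
  · show NormedSpace.exp ((0 : ℂ) • _) * B * NormedSpace.exp ((-(0 : ℂ)) • _) = B
    rw [zero_smul, neg_zero, zero_smul, NormedSpace.exp_zero, one_mul, mul_one]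
end
end

section
/- For every n ≥ 1, every B ∈ Matₙ(ℂ), and all indices 1 ≤ i ≤ m ≤ n and 1 ≤ i′ ≤ m′ ≤ n: tr( B · ( ι_m((B_{(m)})^{i−1})·ι_{m′}((B_{(m′)})^{i′−1}) − ι_{m′}((B_{(m′)})^{i′−1})·ι_m((B_{(m)})^{i−1}) ) ) = 0. (This expresses the vanishing of the Lie–Poisson bracket on gl(n,ℂ)* of the Gelfand–Zeitlin functions p_{m,i}(B) = tr((B_{(m)})^i) and p_{m′,i′}(B) = tr((B_{(m′)})^{i′}), since the differential of p_{m,i} at B is i·ι_m((B_{(m)})^{i−1}) and the Lie–Poisson bracket is {f,g}(B) = tr(B·[df(B), dg(B)]).) -/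
open Matrix

noncomputable section

lemma sum_castLE {M : Type*} [AddCommMonoid M] {m n : ℕ} (hm : m ≤ n) (g : Fin n → M)
    (h : ∀ j : Fin n, m ≤ (j : ℕ) → g j = 0) :
    ∑ j : Fin n, g j = ∑ j : Fin m, g (Fin.castLE hm j) := by
  simp only [← Fin.castLEEmb_apply]
  rw [← Finset.sum_map Finset.univ (Fin.castLEEmb hm) g]
  symm
  apply Finset.sum_subset (Finset.subset_univ _)
  intro x _ hx
  apply h
  by_contra hlt
  push_neg at hlt
  exact hx (Finset.mem_map.mpr ⟨⟨x, hlt⟩, Finset.mem_univ _, rfl⟩)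

lemma iotaEmb_zero_right {m n : ℕ} (X : Matrix (Fin m) (Fin m) ℂ) (a b : Fin n)
    (hb : m ≤ (b : ℕ)) : iotaEmb n X a b = 0 := by
  simp only [iotaEmb]
  split
  · rw [dif_neg (by omega)]
  · rfl

lemma iotaEmb_zero_left {m n : ℕ} (X : Matrix (Fin m) (Fin m) ℂ) (a b : Fin n)
    (ha : m ≤ (a : ℕ)) : iotaEmb n X a b = 0 := by
  simp only [iotaEmb]
  rw [dif_neg (by omega)]

lemma iotaEmb_castLE {m m' n : ℕ} (hmm : m' ≤ n) (X : Matrix (Fin m) (Fin m) ℂ)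
    (a b : Fin m') : iotaEmb n X (Fin.castLE hmm a) (Fin.castLE hmm b) = iotaEmb m' X a b := rfl

lemma trace_mul_iota {m n : ℕ} (hm : m ≤ n) (M : Matrix (Fin n) (Fin n) ℂ)
    (Y : Matrix (Fin m) (Fin m) ℂ) :
    Matrix.trace (M * iotaEmb n Y) = Matrix.trace (ulMinor m hm M * Y) := by
  simp only [Matrix.trace, Matrix.diag, Matrix.mul_apply, ulMinor]
  rw [sum_castLE hm]
  · apply Finset.sum_congr rfl
    intro j _
    rw [sum_castLE hm]
    · apply Finset.sum_congr rfl
      intro l _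
      rw [iotaEmb_castLE]
      simp [iotaEmb, l.isLt, j.isLt]
    · intro l hl
      rw [iotaEmb_zero_left _ _ _ hl, mul_zero]
  · intro j hj
    apply Finset.sum_eq_zero
    intro l _
    rw [iotaEmb_zero_right _ _ _ hj, mul_zero]

lemma ulMinor_mul_iota {m m' n : ℕ} (hmm : m ≤ m') (hm' : m' ≤ n)
    (B : Matrix (Fin n) (Fin n) ℂ) (X : Matrix (Fin m) (Fin m) ℂ) :
    ulMinor m' hm' (B * iotaEmb n X) = ulMinor m' hm' B * iotaEmb m' X := by
  ext j k
  simp only [ulMinor, Matrix.mul_apply]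
  rw [sum_castLE hm']
  · exact Finset.sum_congr rfl fun l _ => by rw [iotaEmb_castLE]
  · intro l hl
    rw [iotaEmb_zero_left _ _ _ (le_trans hmm hl), mul_zero]

lemma ulMinor_iota_mul {m m' n : ℕ} (hmm : m ≤ m') (hm' : m' ≤ n)
    (B : Matrix (Fin n) (Fin n) ℂ) (X : Matrix (Fin m) (Fin m) ℂ) :
    ulMinor m' hm' (iotaEmb n X * B) = iotaEmb m' X * ulMinor m' hm' B := by
  ext j k
  simp only [ulMinor, Matrix.mul_apply]
  rw [sum_castLE hm']
  · exact Finset.sum_congr rfl fun l _ => by rw [iotaEmb_castLE]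
  · intro l hl
    rw [iotaEmb_zero_right _ _ _ (le_trans hmm hl), zero_mul]

lemma gz_key {m m' n : ℕ} (hmm : m ≤ m') (hm' : m' ≤ n)
    (B : Matrix (Fin n) (Fin n) ℂ) (X : Matrix (Fin m) (Fin m) ℂ) (k : ℕ) :
    Matrix.trace (B * (iotaEmb n X * iotaEmb n ((ulMinor m' hm' B) ^ k)
      - iotaEmb n ((ulMinor m' hm' B) ^ k) * iotaEmb n X)) = 0 := by
  have hc : (ulMinor m' hm' B) ^ k * ulMinor m' hm' B
      = ulMinor m' hm' B * (ulMinor m' hm' B) ^ k := ((Commute.refl _).pow_left k).eq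
  set B' := ulMinor m' hm' B with hB'
  set Y := B' ^ k with hY
  rw [Matrix.mul_sub, Matrix.trace_sub]
  have h1 : Matrix.trace (B * (iotaEmb n X * iotaEmb n Y))
      = Matrix.trace (B' * iotaEmb m' X * Y) := by
    rw [← Matrix.mul_assoc, trace_mul_iota hm', ulMinor_mul_iota hmm]
  have h2 : Matrix.trace (B * (iotaEmb n Y * iotaEmb n X))
      = Matrix.trace (iotaEmb m' X * B' * Y) := by
    rw [← Matrix.mul_assoc, Matrix.trace_mul_comm, ← Matrix.mul_assoc,
      trace_mul_iota hm', ulMinor_iota_mul hmm]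
  rw [h1, h2, Matrix.mul_assoc B', Matrix.trace_mul_comm B', Matrix.mul_assoc,
    Matrix.mul_assoc, hc, sub_self]

/-- Poisson-commutativity of the Gelfand–Zeitlin functions `p_{m,i}(B) = tr((B_(m))^i)`:
the Lie–Poisson bracket `tr(B · [ι_m((B_(m))^(i−1)), ι_{m'}((B_(m'))^(i'−1))])` vanishes. -/
theorem gz_hamiltonians_poisson_commute (n : ℕ) (hn : 1 ≤ n)
    (B : Matrix (Fin n) (Fin n) ℂ)
    (m i m' i' : ℕ) (hi1 : 1 ≤ i) (him : i ≤ m) (hm : m ≤ n)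
    (hi1' : 1 ≤ i') (him' : i' ≤ m') (hm' : m' ≤ n) :
    Matrix.trace (B *
      (iotaEmb n ((ulMinor m hm B) ^ (i - 1)) * iotaEmb n ((ulMinor m' hm' B) ^ (i' - 1)) -
       iotaEmb n ((ulMinor m' hm' B) ^ (i' - 1)) * iotaEmb n ((ulMinor m hm B) ^ (i - 1)))) = 0 := by
  rcases le_total m m' with hmm | hmm
  · exact gz_key hmm hm' B _ _
  · have := gz_key hmm hm B ((ulMinor m' hm' B) ^ (i' - 1)) (i - 1)
    rw [Matrix.mul_sub, Matrix.trace_sub] at this ⊢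
    linear_combination -this
end
end

section
/- For every n ≥ 1, every B ∈ Matₙ(ℂ), all indices 1 ≤ i ≤ m ≤ n and 1 ≤ m′ ≤ n, and every z ∈ ℂ: det( w·I_{m′} − (φ_{m,i}(z)(B))_{(m′)} ) = det( w·I_{m′} − B_{(m′)} ) as polynomials in w. That is, the Gelfand–Zeitlin flows preserve the characteristic polynomial of every leading principal submatrix, so each flow stabilises every fiber of the Gelfand–Zeitlin map B ↦ (tr((B_{(m′)})^{i′}))_{1≤i′≤m′≤n}. -/
open Matrix

noncomputable section

namespace GZaux

/-- Restricting a sum over `Fin n` to a sum over `Fin m` when the function vanishes above `m`. -/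
lemma sum_fin_restrict {n m : ℕ} (hmn : m ≤ n) (f : Fin n → ℂ)
    (hf : ∀ k : Fin n, m ≤ (k : ℕ) → f k = 0) :
    ∑ k : Fin n, f k = ∑ k : Fin m, f (Fin.castLE hmn k) := by
  have h0 : ∑ k : Fin m, f (Fin.castLE hmn k)
      = ∑ x ∈ Finset.univ.map (Fin.castLEEmb hmn), f x := by
    rw [Finset.sum_map]; rfl
  rw [h0]
  refine (Finset.sum_subset (Finset.subset_univ _) ?_).symm
  intro x _ hx
  refine hf x ?_
  by_contra hlt
  push_neg at hlt
  exact hx (Finset.mem_map.mpr ⟨⟨x, hlt⟩, Finset.mem_univ _, rfl⟩)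

lemma iota_apply_castLE {n m : ℕ} (hmn : m ≤ n) (X : Matrix (Fin m) (Fin m) ℂ)
    (i j : Fin m) : iotaEmb n X (Fin.castLE hmn i) (Fin.castLE hmn j) = X i j := by
  simp only [iotaEmb, Fin.coe_castLE]
  rw [dif_pos i.isLt, dif_pos j.isLt]

lemma iota_apply_right {n m : ℕ} (X : Matrix (Fin m) (Fin m) ℂ)
    (i j : Fin n) (hj : m ≤ (j : ℕ)) : iotaEmb n X i j = 0 := by
  simp only [iotaEmb]
  rcases lt_or_ge (i : ℕ) m with hi | hi
  · rw [dif_pos hi, dif_neg (not_lt.mpr hj)]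
  · rw [dif_neg (not_lt.mpr hi)]

lemma iota_apply_left {n m : ℕ} (X : Matrix (Fin m) (Fin m) ℂ)
    (i j : Fin n) (hi : m ≤ (i : ℕ)) : iotaEmb n X i j = 0 := by
  simp only [iotaEmb]
  rw [dif_neg (not_lt.mpr hi)]

lemma iota_mul {n m : ℕ} (hmn : m ≤ n) (A B : Matrix (Fin m) (Fin m) ℂ) :
    iotaEmb n A * iotaEmb n B = iotaEmb n (A * B) := by
  ext i j
  rw [Matrix.mul_apply]
  rcases lt_or_ge (i : ℕ) m with hi | hi
  · rcases lt_or_ge (j : ℕ) m with hj | hj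
    · have hi' : i = Fin.castLE hmn ⟨i, hi⟩ := by ext; rfl
      have hj' : j = Fin.castLE hmn ⟨j, hj⟩ := by ext; rfl
      rw [hi', hj', iota_apply_castLE, Matrix.mul_apply]
      rw [sum_fin_restrict hmn _ (fun k hk => by
        rw [iota_apply_right A _ _ hk, zero_mul])]
      refine Finset.sum_congr rfl fun k _ => ?_
      rw [iota_apply_castLE, iota_apply_castLE]
    · rw [iota_apply_right _ _ _ hj]
      refine Finset.sum_eq_zero fun k _ => ?_
      rcases lt_or_ge (k : ℕ) m with hk | hk
      · rw [iota_apply_right B _ _ hj, mul_zero]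
      · rw [iota_apply_right A _ _ hk, zero_mul]
  · rw [iota_apply_left _ _ _ hi]
    refine Finset.sum_eq_zero fun k _ => ?_
    rw [iota_apply_left A _ _ hi, zero_mul]

lemma iota_pow_succ {n m : ℕ} (hmn : m ≤ n) (A : Matrix (Fin m) (Fin m) ℂ) (k : ℕ) :
    (iotaEmb n A) ^ (k + 1) = iotaEmb n (A ^ (k + 1)) := by
  induction k with
  | zero => simp
  | succ k ih => rw [pow_succ, ih, iota_mul hmn, ← pow_succ]

lemma iota_add {n m : ℕ} (A B : Matrix (Fin m) (Fin m) ℂ) :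
    iotaEmb n (A + B) = iotaEmb n A + iotaEmb n B := by
  ext i j
  simp only [iotaEmb, Matrix.add_apply]
  split_ifs <;> simp

lemma iota_smul {n m : ℕ} (c : ℂ) (A : Matrix (Fin m) (Fin m) ℂ) :
    iotaEmb n (c • A) = c • iotaEmb n A := by
  ext i j
  simp only [iotaEmb, Matrix.smul_apply]
  split_ifs <;> simp

/-- `iotaEmb` as a continuous linear map. -/
def iotaCLM (n m : ℕ) : Matrix (Fin m) (Fin m) ℂ →L[ℂ] Matrix (Fin n) (Fin n) ℂ where
  toFun := iotaEmb n
  map_add' := iota_add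
  map_smul' := iota_smul
  cont := by
    apply continuous_pi
    intro i
    apply continuous_pi
    intro j
    simp only [iotaEmb]
    split_ifs with hi hj
    · exact (continuous_apply _).comp (continuous_apply _)
    · exact continuous_const
    · exact continuous_const

set_option maxHeartbeats 1000000 in
/-- Key structural fact: `exp(ι Y) = 1 + ι(exp Y - 1)`. -/
lemma exp_iota {n m : ℕ} (hmn : m ≤ n) (Y : Matrix (Fin m) (Fin m) ℂ) :
    NormedSpace.exp (iotaEmb n Y) = 1 + iotaEmb n (NormedSpace.exp Y - 1) := by
  letI : SeminormedRing (Matrix (Fin n) (Fin n) ℂ) := Matrix.linftyOpSemiNormedRing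
  letI : NormedRing (Matrix (Fin n) (Fin n) ℂ) := Matrix.linftyOpNormedRing
  letI : NormedAlgebra ℂ (Matrix (Fin n) (Fin n) ℂ) := Matrix.linftyOpNormedAlgebra
  letI : SeminormedRing (Matrix (Fin m) (Fin m) ℂ) := Matrix.linftyOpSemiNormedRing
  letI : NormedRing (Matrix (Fin m) (Fin m) ℂ) := Matrix.linftyOpNormedRing
  letI : NormedAlgebra ℂ (Matrix (Fin m) (Fin m) ℂ) := Matrix.linftyOpNormedAlgebra
  have hsum : Summable (fun k : ℕ => ((Nat.factorial k : ℂ))⁻¹ • (iotaEmb n Y) ^ k) :=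
    NormedSpace.expSeries_summable' (𝕂 := ℂ) (iotaEmb n Y)
  have hsumY : Summable (fun k : ℕ => ((Nat.factorial k : ℂ))⁻¹ • Y ^ k) :=
    NormedSpace.expSeries_summable' (𝕂 := ℂ) Y
  have hsumY' : Summable (fun k : ℕ => ((Nat.factorial (k + 1) : ℂ))⁻¹ • Y ^ (k + 1)) := by
    exact (summable_nat_add_iff 1).mpr hsumY
  have h1 : NormedSpace.exp (iotaEmb n Y)
      = ∑' k : ℕ, ((Nat.factorial k : ℂ))⁻¹ • (iotaEmb n Y) ^ k := by
    rw [NormedSpace.exp_eq_tsum ℂ]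
  have h2 : NormedSpace.exp Y = ∑' k : ℕ, ((Nat.factorial k : ℂ))⁻¹ • Y ^ k := by
    rw [NormedSpace.exp_eq_tsum ℂ]
  rw [h1, Summable.tsum_eq_zero_add hsum]
  have h3 : ((Nat.factorial 0 : ℂ))⁻¹ • (iotaEmb n Y) ^ 0 = 1 := by simp
  rw [h3]
  congr 1
  have h4 : (fun k : ℕ => ((Nat.factorial (k + 1) : ℂ))⁻¹ • (iotaEmb n Y) ^ (k + 1))
      = fun k : ℕ => iotaCLM n m (((Nat.factorial (k + 1) : ℂ))⁻¹ • Y ^ (k + 1)) := by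
    funext k
    rw [iota_pow_succ hmn]
    exact (map_smul (iotaCLM n m) _ _).symm
  rw [h4, ← (iotaCLM n m).map_tsum hsumY']
  have h5 : (∑' k : ℕ, ((Nat.factorial (k + 1) : ℂ))⁻¹ • Y ^ (k + 1)) = NormedSpace.exp Y - 1 := by
    rw [h2, Summable.tsum_eq_zero_add hsumY]
    simp
  rw [h5]
  rfl

lemma ulMinor_mul_left {n m' : ℕ} (hm' : m' ≤ n) (U V : Matrix (Fin n) (Fin n) ℂ)
    (hU : ∀ i j : Fin n, (i : ℕ) < m' → m' ≤ (j : ℕ) → U i j = 0) :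
    ulMinor m' hm' (U * V) = ulMinor m' hm' U * ulMinor m' hm' V := by
  ext i j
  simp only [ulMinor, Matrix.mul_apply]
  rw [sum_fin_restrict hm' _ (fun k hk => by
    rw [hU _ _ (i.isLt) hk, zero_mul])]

lemma ulMinor_mul_right {n m' : ℕ} (hm' : m' ≤ n) (U V : Matrix (Fin n) (Fin n) ℂ)
    (hV : ∀ i j : Fin n, m' ≤ (i : ℕ) → (j : ℕ) < m' → V i j = 0) :
    ulMinor m' hm' (U * V) = ulMinor m' hm' U * ulMinor m' hm' V := by
  ext i j
  simp only [ulMinor, Matrix.mul_apply]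
  rw [sum_fin_restrict hm' _ (fun k hk => by
    rw [hV _ _ hk (j.isLt), mul_zero])]

lemma ulMinor_one {n m' : ℕ} (hm' : m' ≤ n) : ulMinor m' hm' (1 : Matrix (Fin n) (Fin n) ℂ) = 1 := by
  ext i j
  simp only [ulMinor, Matrix.one_apply]
  by_cases h : i = j
  · subst h; simp
  · rw [if_neg (fun hc => h (Fin.castLE_injective hm' hc)), if_neg h]

lemma ulMinor_oneAddIota {n m : ℕ} (hmn : m ≤ n) (W : Matrix (Fin m) (Fin m) ℂ) :
    ulMinor m hmn (1 + iotaEmb n W) = 1 + W := by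
  ext i j
  simp only [ulMinor, Matrix.add_apply]
  rw [iota_apply_castLE]
  congr 1
  simp only [Matrix.one_apply]
  by_cases h : i = j
  · subst h; simp
  · rw [if_neg (fun hc => h (Fin.castLE_injective hmn hc)), if_neg h]

/-- The matrices `1 + ι W` have vanishing upper-right block at any level `m' ≥ m`. -/
lemma oneAddIota_ur {n m m' : ℕ} (hmm' : m ≤ m') (W : Matrix (Fin m) (Fin m) ℂ)
    (i j : Fin n) (hi : (i : ℕ) < m') (hj : m' ≤ (j : ℕ)) :
    (1 + iotaEmb n W) i j = 0 := by
  have hij : i ≠ j := fun hc => by rw [hc] at hi; omega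
  rw [Matrix.add_apply, iota_apply_right _ _ _ (hmm'.trans hj), Matrix.one_apply_ne hij, add_zero]

lemma oneAddIota_ll {n m m' : ℕ} (hmm' : m ≤ m') (W : Matrix (Fin m) (Fin m) ℂ)
    (i j : Fin n) (hi : m' ≤ (i : ℕ)) (hj : (j : ℕ) < m') :
    (1 + iotaEmb n W) i j = 0 := by
  have hij : i ≠ j := fun hc => by rw [hc] at hi; omega
  rw [Matrix.add_apply, iota_apply_left _ _ _ (hmm'.trans hi), Matrix.one_apply_ne hij, add_zero]

/-- similarity invariance of the characteristic polynomial -/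
lemma charpoly_conj_aux {k : ℕ} (G N G' : Matrix (Fin k) (Fin k) ℂ) (h : G * G' = 1) :
    (G * N * G').charpoly = N.charpoly := by
  classical
  unfold Matrix.charpoly
  have hc : charmatrix (G * N * G')
      = (Polynomial.C : ℂ →+* Polynomial ℂ).mapMatrix G * charmatrix N
        * (Polynomial.C : ℂ →+* Polynomial ℂ).mapMatrix G' := by
    unfold charmatrix
    rw [mul_sub, sub_mul, ← _root_.map_mul, ← _root_.map_mul]
    congr 1
    have hcomm : (Polynomial.C : ℂ →+* Polynomial ℂ).mapMatrix G * Matrix.scalar (Fin k) (Polynomial.X : Polynomial ℂ)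
        = Matrix.scalar (Fin k) (Polynomial.X : Polynomial ℂ) * (Polynomial.C : ℂ →+* Polynomial ℂ).mapMatrix G :=
      (Matrix.scalar_commute _ (fun r => Commute.all _ r) _).symm
    rw [hcomm, mul_assoc, ← _root_.map_mul, h, _root_.map_one, mul_one]
  rw [hc, Matrix.det_mul, Matrix.det_mul]
  have h2 : ((Polynomial.C : ℂ →+* Polynomial ℂ).mapMatrix G).det
      * ((Polynomial.C : ℂ →+* Polynomial ℂ).mapMatrix G').det = 1 := by
    rw [← Matrix.det_mul, ← _root_.map_mul, h, _root_.map_one, Matrix.det_one]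
  calc ((Polynomial.C : ℂ →+* Polynomial ℂ).mapMatrix G).det * (charmatrix N).det
        * ((Polynomial.C : ℂ →+* Polynomial ℂ).mapMatrix G').det
      = (charmatrix N).det * (((Polynomial.C : ℂ →+* Polynomial ℂ).mapMatrix G).det
        * ((Polynomial.C : ℂ →+* Polynomial ℂ).mapMatrix G').det) := by ring
    _ = (charmatrix N).det := by rw [h2, mul_one]

end GZaux

open GZaux

/-- The Gelfand–Zeitlin flows preserve the characteristic polynomial of every leading
principal submatrix: `det(w·I_{m'} − (φ_{m,i}(z)(B))_(m')) = det(w·I_{m'} − B_(m'))` as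
polynomials in `w`. -/
theorem gz_flow_preserves_minor_charpoly (n : ℕ) (hn : 1 ≤ n)
    (m i : ℕ) (hi1 : 1 ≤ i) (him : i ≤ m) (hm : m ≤ n)
    (m' : ℕ) (hm'1 : 1 ≤ m') (hm' : m' ≤ n)
    (z : ℂ) (B : Matrix (Fin n) (Fin n) ℂ) :
    (ulMinor m' hm' (gzFlow m i hm z B)).charpoly = (ulMinor m' hm' B).charpoly := by
  set X : Matrix (Fin m) (Fin m) ℂ := (ulMinor m hm B) ^ (i - 1) with hX
  set E : Matrix (Fin m) (Fin m) ℂ := NormedSpace.exp (z • X) with hE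
  set E' : Matrix (Fin m) (Fin m) ℂ := NormedSpace.exp ((-z) • X) with hE'
  have hsmul : z • iotaEmb n X = iotaEmb n (z • X) := (iota_smul z X).symm
  have hsmul' : (-z) • iotaEmb n X = iotaEmb n ((-z) • X) := (iota_smul (-z) X).symm
  have hg : NormedSpace.exp (z • iotaEmb n X) = 1 + iotaEmb n (E - 1) := by
    rw [hsmul, exp_iota hm]
  have hg' : NormedSpace.exp ((-z) • iotaEmb n X) = 1 + iotaEmb n (E' - 1) := by
    rw [hsmul', exp_iota hm]
  have hEE' : E * E' = 1 := by
    rw [hE, hE', ← Matrix.exp_add_of_commute _ _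
      (((Commute.refl X).smul_right (-z)).smul_left z)]
    have : z • X + (-z) • X = 0 := by rw [neg_smul, add_neg_cancel]
    rw [this, NormedSpace.exp_zero]
  have hflow : gzFlow m i hm z B = (1 + iotaEmb n (E - 1)) * B * (1 + iotaEmb n (E' - 1)) := by
    rw [gzFlow, ← hX, hg, hg']
  have hgg' : (1 + iotaEmb n (E - 1)) * (1 + iotaEmb n (E' - 1))
      = (1 : Matrix (Fin n) (Fin n) ℂ) := by
    rw [← hg, ← hg', ← Matrix.exp_add_of_commute _ _
      (((Commute.refl (iotaEmb n X)).smul_right (-z)).smul_left z)]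
    have : z • iotaEmb n X + (-z) • iotaEmb n X = 0 := by rw [neg_smul, add_neg_cancel]
    rw [this, NormedSpace.exp_zero]
  rcases le_or_gt m' m with h1 | h2
  · -- m' ≤ m : the minors are literally equal
    have hminor_m : ulMinor m hm (gzFlow m i hm z B) = ulMinor m hm B := by
      rw [hflow, mul_assoc, ulMinor_mul_left hm _ _ (fun a b ha hb => oneAddIota_ur le_rfl _ a b ha hb),
        ulMinor_mul_right hm _ _ (fun a b ha hb => oneAddIota_ll le_rfl _ a b ha hb),
        ulMinor_oneAddIota hm, ulMinor_oneAddIota hm]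
      have hEform : (1 : Matrix (Fin m) (Fin m) ℂ) + (E - 1) = E := by abel
      have hE'form : (1 : Matrix (Fin m) (Fin m) ℂ) + (E' - 1) = E' := by abel
      rw [hEform, hE'form]
      have hcommB : Commute (ulMinor m hm B) E := by
        rw [hE]
        exact (((Commute.refl (ulMinor m hm B)).pow_right (i - 1)).smul_right z).exp_right
      calc E * (ulMinor m hm B * E') = (E * ulMinor m hm B) * E' := by rw [mul_assoc]
        _ = (ulMinor m hm B * E) * E' := by rw [hcommB.symm.eq]
        _ = ulMinor m hm B * (E * E') := by rw [mul_assoc]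
        _ = ulMinor m hm B := by rw [hEE', mul_one]
    have key : ulMinor m' hm' (gzFlow m i hm z B) = ulMinor m' hm' B := by
      ext a b
      have ha : (a : ℕ) < m := lt_of_lt_of_le a.isLt h1
      have hb : (b : ℕ) < m := lt_of_lt_of_le b.isLt h1
      exact congrFun (congrFun hminor_m ⟨a, ha⟩) ⟨b, hb⟩
    rw [key]
  · -- m < m' : the minor is conjugated by an invertible matrix
    have hmm' : m ≤ m' := h2.le
    set G := ulMinor m' hm' (1 + iotaEmb n (E - 1)) with hG
    set G' := ulMinor m' hm' (1 + iotaEmb n (E' - 1)) with hG'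
    have hmain : ulMinor m' hm' (gzFlow m i hm z B) = G * ulMinor m' hm' B * G' := by
      rw [hflow, mul_assoc,
        ulMinor_mul_left hm' _ _ (fun a b ha hb => oneAddIota_ur hmm' _ a b ha hb),
        ulMinor_mul_right hm' _ _ (fun a b ha hb => oneAddIota_ll hmm' _ a b ha hb),
        ← mul_assoc]
    have hGG' : G * G' = 1 := by
      rw [hG, hG', ← ulMinor_mul_left hm' _ _ (fun a b ha hb => oneAddIota_ur hmm' _ a b ha hb),
        hgg', ulMinor_one]
    rw [hmain]
    exact charpoly_conj_aux G (ulMinor m' hm' B) G' hGG'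
end
end

section
/- Let 1 ≤ m < k, let X ∈ Mat_m(ℂ), a, b ∈ ℂ^m and c ∈ ℂ^{k−m}, and let B be the k×k complex matrix whose upper-left m×m block is X, whose (j,k)-entry is b_j for 1 ≤ j ≤ m, whose (m+1)-st row has entries a_1,…,a_m in columns 1,…,m and c_1 in column k, whose (j, j−1)-entry is 1 and (j,k)-entry is c_{j−m} for m+2 ≤ j ≤ k, and all of whose other entries are 0. Then, as polynomials in z: det(z·I_k − B) = det(z·I_m − X)·( z^{k−m} − Σ_{j=1}^{k−m} c_j·z^{j−1} ) − aᵀ·adj(z·I_m − X)·b, where adj denotes the adjugate matrix. (This is the determinant identity for generalized companion matrices used in the proof of the paper's Theorem 4.2, with signs made explicit.) -/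
open Matrix Polynomial

noncomputable section

private def compM (n : ℕ) (c : Fin n → ℂ) : Matrix (Fin n) (Fin n) ℂ :=
  fun i j => if (j : ℕ) + 1 = (i : ℕ) then 1 else if (j : ℕ) = n - 1 then c i else 0

private lemma charmatrix_compM_apply (n : ℕ) (c : Fin n → ℂ) (i j : Fin n) :
    charmatrix (compM n c) i j =
      (if (i : ℕ) = (j : ℕ) then X else 0)
        - C (if (j : ℕ) + 1 = (i : ℕ) then 1 else if (j : ℕ) = n - 1 then c i else 0) := by
  rw [charmatrix_apply, compM]
  congr 1
  simp [diagonal, Fin.ext_iff]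

private lemma triag (n : ℕ) (c : Fin (n + 1) → ℂ) :
    ((charmatrix (compM (n + 1) c)).submatrix Fin.succ Fin.castSucc).det = (-1) ^ n := by
  rw [Matrix.det_of_upperTriangular]
  · have hdiag : ∀ i : Fin n,
        charmatrix (compM (n + 1) c) (Fin.succ i) (Fin.castSucc i) = -1 := by
      intro i
      rw [charmatrix_compM_apply]
      have e1 : ¬ (((Fin.succ i : Fin (n+1)) : ℕ) = ((Fin.castSucc i : Fin (n+1)) : ℕ)) := by
        simp
      have e2 : ((Fin.castSucc i : Fin (n+1)) : ℕ) + 1 = ((Fin.succ i : Fin (n+1)) : ℕ) := by simp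
      simp [e1, e2]
    simp only [submatrix_apply]
    simp [hdiag]
  · intro i j hij
    have hij' : (j : ℕ) < (i : ℕ) := hij
    rw [submatrix_apply, charmatrix_compM_apply]
    have e1 : ¬ ((i : ℕ) + 1 = (j : ℕ)) := by omega
    have e2 : ¬ ((j : ℕ) = (i : ℕ)) := by omega
    have e3 : ¬ ((j : ℕ) = n) := by omega
    simp [e1, e2, e3]

private lemma compM_charpoly : ∀ (n : ℕ) (c : Fin n → ℂ),
    (compM n c).charpoly = X ^ n - ∑ j : Fin n, C (c j) * X ^ (j : ℕ) := by
  intro n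
  induction n with
  | zero => intro c; simp [Matrix.charpoly, Matrix.det_fin_zero]
  | succ n ih =>
    intro c
    match n, ih with
    | 0, _ =>
      rw [Matrix.charpoly]
      rw [Matrix.det_fin_one]
      rw [charmatrix_compM_apply]
      simp
    | (n+1), ih =>
      rw [Matrix.charpoly, Matrix.det_succ_row_zero]
      have hM0 : ∀ j : Fin (n + 2), charmatrix (compM (n + 2) c) 0 j =
          (if j = 0 then X else 0) + (if (j : ℕ) = n + 1 then -C (c 0) else 0) := by
        intro j
        rw [charmatrix_compM_apply]
        have h1 : ¬ ((j : ℕ) + 1 = (0 : ℕ)) := by omega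
        by_cases h2 : (j : ℕ) = 0 <;> by_cases h3 : (j : ℕ) = n + 1 <;>
          simp [h1, h2, h3, Fin.ext_iff, eq_comm] <;> omega
      have hsplit : ∀ j : Fin (n + 2),
          (-1 : ℂ[X]) ^ (j : ℕ) * charmatrix (compM (n + 2) c) 0 j *
            ((charmatrix (compM (n + 2) c)).submatrix Fin.succ j.succAbove).det =
          ((-1 : ℂ[X]) ^ (j : ℕ) * (if j = 0 then X else 0) *
            ((charmatrix (compM (n + 2) c)).submatrix Fin.succ j.succAbove).det) +
          ((-1 : ℂ[X]) ^ (j : ℕ) * (if (j : ℕ) = n + 1 then -C (c 0) else 0) *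
            ((charmatrix (compM (n + 2) c)).submatrix Fin.succ j.succAbove).det) := by
        intro j; rw [hM0]; ring
      rw [Finset.sum_congr rfl (fun j _ => hsplit j), Finset.sum_add_distrib]
      have hsum1 : ∑ j : Fin (n + 2), ((-1 : ℂ[X]) ^ (j : ℕ) * (if j = 0 then X else 0) *
            ((charmatrix (compM (n + 2) c)).submatrix Fin.succ j.succAbove).det) =
          X * ((charmatrix (compM (n + 2) c)).submatrix Fin.succ Fin.succ).det := by
        rw [Finset.sum_eq_single (0 : Fin (n + 2))]
        · simp [Fin.succAbove_zero]
        · intro j _ hj; simp [hj]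
        · simp
      have hsub : (charmatrix (compM (n + 2) c)).submatrix Fin.succ Fin.succ =
          charmatrix (compM (n + 1) (fun i => c i.succ)) := by
        ext i j
        rw [submatrix_apply, charmatrix_compM_apply, charmatrix_compM_apply]
        have e1 : (((Fin.succ i : Fin (n+2)) : ℕ) = ((Fin.succ j : Fin (n+2)) : ℕ)) ↔
            ((i : ℕ) = (j : ℕ)) := by simp
        have e2 : (((Fin.succ j : Fin (n+2)) : ℕ) + 1 = ((Fin.succ i : Fin (n+2)) : ℕ)) ↔
            ((j : ℕ) + 1 = (i : ℕ)) := by simp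
        have e3 : (((Fin.succ j : Fin (n+2)) : ℕ) = (n + 2) - 1) ↔ ((j : ℕ) = (n + 1) - 1) := by
          rw [Fin.val_succ]; omega
        rw [if_congr e1 rfl rfl, if_congr e2 rfl (if_congr e3 rfl rfl)]
      have hsum2 : ∑ j : Fin (n + 2), ((-1 : ℂ[X]) ^ (j : ℕ) *
            (if (j : ℕ) = n + 1 then -C (c 0) else 0) *
            ((charmatrix (compM (n + 2) c)).submatrix Fin.succ j.succAbove).det) =
          -C (c 0) := by
        rw [Finset.sum_eq_single (Fin.last (n + 1))]
        · rw [Fin.succAbove_last]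
          have : ((Fin.last (n+1) : Fin (n+2)) : ℕ) = n + 1 := rfl
          rw [this, if_pos rfl, triag]
          have h4 : ((-1 : ℂ[X]) ^ (n+1)) * ((-1 : ℂ[X]) ^ (n+1)) = 1 := by
            rw [← mul_pow]; simp
          linear_combination (-C (c 0)) * h4
        · intro j _ hj
          have : ¬ ((j : ℕ) = n + 1) := by
            intro h; exact hj (Fin.ext h)
          simp [this]
        · simp
      rw [hsum1, hsum2, hsub]
      have hcp : ((compM (n+1) fun i => c i.succ).charmatrix).det
          = (compM (n+1) fun i => c i.succ).charpoly := rfl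
      rw [hcp, ih]
      rw [Fin.sum_univ_succ (f := fun j : Fin (n+2) => C (c j) * X ^ (j : ℕ))]
      have hXS : X * (∑ j : Fin (n+1), C (c j.succ) * X ^ (j : ℕ)) =
          ∑ j : Fin (n+1), C (c j.succ) * X ^ ((Fin.succ j : Fin (n+2)) : ℕ) := by
        rw [Finset.mul_sum]
        exact Finset.sum_congr rfl fun j _ => by rw [Fin.val_succ]; ring
      rw [mul_sub, hXS]
      simp only [Fin.val_zero, pow_zero, mul_one]
      ring

/-- The generalized companion matrix with parameter `m < k`, built from an `m × m` block
`X`, vectors `a, b ∈ ℂ^m` and `c ∈ ℂ^{k−m}`: the upper-left block is `X`, the last column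
carries `b` (rows `< m`) and `c` (rows `≥ m`), the row of index `m` carries `a` in the
first `m` columns, rows of index `> m` carry a subdiagonal `1`, and all other entries
vanish. -/
def genComp {k m : ℕ} (hm : m < k) (X : Matrix (Fin m) (Fin m) ℂ)
    (a b : Fin m → ℂ) (c : Fin (k - m) → ℂ) : Matrix (Fin k) (Fin k) ℂ :=
  fun i j =>
    if hi : (i : ℕ) < m then
      (if hj : (j : ℕ) < m then X ⟨i, hi⟩ ⟨j, hj⟩
       else if (j : ℕ) = k - 1 then b ⟨i, hi⟩ else 0)
    else if (i : ℕ) = m then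
      (if hj : (j : ℕ) < m then a ⟨j, hj⟩
       else if (j : ℕ) = k - 1 then c ⟨0, by omega⟩ else 0)
    else
      (if (j : ℕ) + 1 = (i : ℕ) then 1
       else if (j : ℕ) = k - 1 then c ⟨(i : ℕ) - m, by have := i.isLt; omega⟩ else 0)

private lemma genComp_eq_reindex {k m : ℕ} (hm : m < k) (X : Matrix (Fin m) (Fin m) ℂ)
    (a b : Fin m → ℂ) (c : Fin (k - m) → ℂ) (hk : m + (k - m) = k) :
    genComp hm X a b c =
      reindex (finSumFinEquiv.trans (finCongr hk)) (finSumFinEquiv.trans (finCongr hk))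
        (fromBlocks X
          (Matrix.of fun (i : Fin m) (j : Fin (k - m)) => if (j : ℕ) = (k - m) - 1 then b i else 0)
          (Matrix.of fun (i : Fin (k - m)) (j : Fin m) => if (i : ℕ) = 0 then a j else 0)
          (compM (k - m) c)) := by
  set e := finSumFinEquiv.trans (finCongr hk) with he
  have hvl : ∀ i : Fin m, ((e (Sum.inl i)) : ℕ) = (i : ℕ) := by
    intro i; simp [he, finSumFinEquiv_apply_left]
  have hvr : ∀ i : Fin (k - m), ((e (Sum.inr i)) : ℕ) = m + (i : ℕ) := by
    intro i; simp [he, finSumFinEquiv_apply_right]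
  ext i j
  obtain ⟨p, rfl⟩ := e.surjective i
  obtain ⟨q, rfl⟩ := e.surjective j
  rw [reindex_apply, submatrix_apply, Equiv.symm_apply_apply, Equiv.symm_apply_apply]
  rcases p with i | i <;> rcases q with j | j
  · -- inl inl
    rw [genComp, dif_pos (by rw [hvl]; exact i.isLt), dif_pos (by rw [hvl]; exact j.isLt)]
    simp [hvl, Fin.eta]
  · -- inl inr
    have h1 : (e (Sum.inl i) : ℕ) < m := by rw [hvl]; exact i.isLt
    have h2 : ¬ ((e (Sum.inr j) : ℕ) < m) := by rw [hvr]; omega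
    rw [genComp, dif_pos h1, dif_neg h2]
    have h3 : ((e (Sum.inr j) : ℕ) = k - 1) ↔ ((j : ℕ) = (k - m) - 1) := by
      rw [hvr]; have := j.isLt; omega
    simp only [fromBlocks_apply₁₂, Matrix.of_apply]
    rw [if_congr h3 rfl rfl]
    have h5 : (⟨(e (Sum.inl i) : ℕ), h1⟩ : Fin m) = i := Fin.ext (hvl i)
    rw [h5]
  · -- inr inl
    have h1 : ¬ ((e (Sum.inr i) : ℕ) < m) := by rw [hvr]; omega
    rw [genComp, dif_neg h1]
    by_cases hi0 : (i : ℕ) = 0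
    · have h2 : (e (Sum.inr i) : ℕ) = m := by have hv := hvr i; omega
      rw [if_pos h2, dif_pos (by rw [hvl]; exact j.isLt)]
      simp [hvl, hi0, Fin.eta]
    · have h2 : ¬ ((e (Sum.inr i) : ℕ) = m) := by rw [hvr]; omega
      rw [if_neg h2]
      have h3 : ¬ ((e (Sum.inl j) : ℕ) + 1 = (e (Sum.inr i) : ℕ)) := by
        rw [hvl, hvr]; have := j.isLt; omega
      have h4 : ¬ ((e (Sum.inl j) : ℕ) = k - 1) := by
        rw [hvl]; have := j.isLt; omega
      simp [h3, h4, hi0]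
  · -- inr inr
    have h1 : ¬ ((e (Sum.inr i) : ℕ) < m) := by rw [hvr]; omega
    rw [genComp, dif_neg h1]
    simp only [fromBlocks_apply₂₂, compM]
    by_cases hi0 : (i : ℕ) = 0
    · have h2 : (e (Sum.inr i) : ℕ) = m := by have hv := hvr i; omega
      rw [if_pos h2]
      have h3 : ¬ ((e (Sum.inr j) : ℕ) < m) := by rw [hvr]; omega
      rw [dif_neg h3]
      have h4 : ((e (Sum.inr j) : ℕ) = k - 1) ↔ ((j : ℕ) = (k - m) - 1) := by
        rw [hvr]; have := j.isLt; omega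
      have h5 : ¬ ((j : ℕ) + 1 = (i : ℕ)) := by omega
      rw [if_congr h4 rfl rfl, if_neg h5]
      split
      · congr 1; exact Fin.ext (by simp [hi0])
      · rfl
    · have h2 : ¬ ((e (Sum.inr i) : ℕ) = m) := by rw [hvr]; omega
      rw [if_neg h2]
      have h3 : ((e (Sum.inr j) : ℕ) + 1 = (e (Sum.inr i) : ℕ)) ↔ ((j : ℕ) + 1 = (i : ℕ)) := by
        simp only [hvr]; omega
      have h4 : ((e (Sum.inr j) : ℕ) = k - 1) ↔ ((j : ℕ) = (k - m) - 1) := by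
        rw [hvr]; have := j.isLt; omega
      rw [if_congr h3 rfl (if_congr h4 rfl rfl)]
      split
      · rfl
      split
      · congr 1
        refine Fin.ext ?_
        have hv := hvr i
        simp only [Fin.val_mk]
        omega
      · rfl

set_option synthInstance.maxHeartbeats 1000000 in
private lemma key (m n : ℕ) (hn : 1 ≤ n) (Xm : Matrix (Fin m) (Fin m) ℂ)
    (a b : Fin m → ℂ) (c : Fin n → ℂ) :
    (fromBlocks Xm
      (Matrix.of fun (i : Fin m) (j : Fin n) => if (j : ℕ) = n - 1 then b i else 0)
      (Matrix.of fun (i : Fin n) (j : Fin m) => if (i : ℕ) = 0 then a j else 0)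
      (compM n c)).charpoly =
    Xm.charpoly * (X ^ n - ∑ j : Fin n, C (c j) * X ^ (j : ℕ)) -
      ∑ i : Fin m, ∑ j : Fin m, C (a i) * (charmatrix Xm).adjugate i j * C (b j) := by
  obtain ⟨n', rfl⟩ : ∃ n', n = n' + 1 := ⟨n - 1, by omega⟩
  set f : ℂ[X] →+* RatFunc ℂ := algebraMap ℂ[X] (RatFunc ℂ) with hf
  have hinj : Function.Injective f := IsFractionRing.injective _ _
  apply hinj
  rw [Matrix.charpoly, charmatrix_fromBlocks, RingHom.map_det, RingHom.mapMatrix_apply]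
  rw [fromBlocks_map]
  set A : Matrix (Fin m) (Fin m) (RatFunc ℂ) := (charmatrix Xm).map f with hA
  have hdetA : A.det = f Xm.charpoly := by
    rw [hA, Matrix.charpoly, ← RingHom.mapMatrix_apply, ← RingHom.map_det]
  have hdetA0 : A.det ≠ 0 := by
    rw [hdetA]
    exact (map_eq_zero_iff f hinj).not.mpr Xm.charpoly_monic.ne_zero
  haveI : Invertible A := A.invertibleOfIsUnitDet (isUnit_iff_ne_zero.mpr hdetA0)
  rw [Matrix.det_fromBlocks₁₁]
  set W := ⅟A with hW
  set s : RatFunc ℂ := ∑ p : Fin m, ∑ q : Fin m, f (C (a p)) * W p q * f (C (b q)) with hs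
  set D' : Matrix (Fin (n' + 1)) (Fin (n' + 1)) (RatFunc ℂ) :=
    (charmatrix (compM (n' + 1) c)).map f with hD
  set e0 : Fin (n' + 1) → RatFunc ℂ := fun i => if i = 0 then 1 else 0 with he0
  have hG : ((- (Matrix.of fun (i : Fin (n'+1)) (j : Fin m) =>
          if (i : ℕ) = 0 then a j else 0).map C).map f) * W *
        ((- (Matrix.of fun (i : Fin m) (j : Fin (n'+1)) =>
          if (j : ℕ) = (n'+1) - 1 then b i else 0).map C).map f) =
      Matrix.of (fun (i j : Fin (n'+1)) =>
        if (i : ℕ) = 0 ∧ (j : ℕ) = n' then s else 0) := by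
    ext i j
    simp only [Matrix.mul_apply, Matrix.map_apply, Matrix.neg_apply, Matrix.of_apply,
      Nat.add_sub_cancel]
    by_cases hi : (i : ℕ) = 0 <;> by_cases hj : (j : ℕ) = n' <;>
      simp only [hi, hj, if_true, if_false, and_true, and_false, true_and, false_and,
        map_zero, C_0, neg_zero, mul_zero, zero_mul, Finset.sum_const_zero,
        ite_true, ite_false]
    · rw [hs, Finset.sum_comm]
      apply Finset.sum_congr rfl
      intro q _
      rw [Finset.sum_mul]
      apply Finset.sum_congr rfl
      intro p _
      simp only [map_neg]
      ring
  rw [hG]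
  have hUp : D' - Matrix.of (fun (i j : Fin (n'+1)) =>
        if (i : ℕ) = 0 ∧ (j : ℕ) = n' then s else 0) =
      updateCol D' (Fin.last n')
        ((fun i => D' i (Fin.last n')) + (-s) • e0) := by
    ext i j
    by_cases hj : j = Fin.last n'
    · subst hj
      rw [Matrix.sub_apply, Matrix.updateCol_self]
      simp only [Matrix.of_apply, Pi.add_apply, Pi.smul_apply, smul_eq_mul, he0]
      have hlast : ((Fin.last n' : Fin (n'+1)) : ℕ) = n' := rfl
      rw [hlast]
      by_cases hi : i = 0
      · simp only [hi, Fin.val_zero, true_and, if_pos rfl, if_true]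
        ring
      · have hi' : ¬ ((i : ℕ) = 0) := fun h => hi (Fin.ext h)
        simp [hi, hi']
    · rw [Matrix.sub_apply, Matrix.updateCol_ne hj]
      have : ¬ ((j : ℕ) = n') := fun h => hj (Fin.ext h)
      simp [this]
  rw [hUp, det_updateCol_add, det_updateCol_smul, updateCol_eq_self]
  have hdetU : (updateCol D' (Fin.last n') e0).det = 1 := by
    rw [Matrix.det_succ_column _ (Fin.last n')]
    rw [Finset.sum_eq_single (0 : Fin (n' + 1))]
    · rw [Fin.succAbove_last, Fin.succAbove_zero]
      have hsubU : (updateCol D' (Fin.last n') e0).submatrix Fin.succ Fin.castSucc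
          = ((charmatrix (compM (n'+1) c)).submatrix Fin.succ Fin.castSucc).map f := by
        ext r t
        rw [Matrix.submatrix_apply, Matrix.updateCol_ne (Fin.castSucc_lt_last t).ne]
        rfl
      rw [hsubU]
      have hmd : (((charmatrix (compM (n'+1) c)).submatrix Fin.succ Fin.castSucc).map f).det
          = f (((charmatrix (compM (n'+1) c)).submatrix Fin.succ Fin.castSucc).det) := by
        rw [← RingHom.mapMatrix_apply, ← RingHom.map_det]
      rw [hmd, triag, Matrix.updateCol_self]
      simp only [he0, if_pos rfl, map_pow, map_neg, _root_.map_one, Fin.val_zero, Fin.val_last,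
        zero_add, mul_one]
      rw [← mul_pow]
      simp
    · intro i _ hi
      rw [Matrix.updateCol_self]
      simp [he0, hi]
    · simp
  rw [hdetU, mul_one]
  have hdetD : D'.det = f ((compM (n' + 1) c).charpoly) := by
    rw [hD, Matrix.charpoly, ← RingHom.mapMatrix_apply, ← RingHom.map_det]
  rw [hdetD, compM_charpoly]
  have hAs : A.det * s = f (∑ i : Fin m, ∑ j : Fin m,
      C (a i) * (charmatrix Xm).adjugate i j * C (b j)) := by
    rw [hs, map_sum, Finset.mul_sum]
    apply Finset.sum_congr rfl
    intro p _
    rw [map_sum, Finset.mul_sum]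
    apply Finset.sum_congr rfl
    intro q _
    have hAW : A.det * W p q = f ((charmatrix Xm).adjugate p q) := by
      rw [hW, invOf_eq_nonsing_inv, Matrix.inv_def]
      simp only [Matrix.smul_apply, smul_eq_mul]
      rw [← mul_assoc, Ring.inverse_eq_inv, mul_inv_cancel₀ hdetA0, one_mul]
      rw [hA, ← RingHom.mapMatrix_apply, ← RingHom.map_adjugate]
      simp [RingHom.mapMatrix_apply]
    calc A.det * (f (C (a p)) * W p q * f (C (b q)))
        = f (C (a p)) * (A.det * W p q) * f (C (b q)) := by ring
      _ = f (C (a p) * (charmatrix Xm).adjugate p q * C (b q)) := by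
          rw [hAW, _root_.map_mul, _root_.map_mul]
  rw [_root_.map_sub, _root_.map_sub, _root_.map_mul, _root_.map_sub, ← hdetA, ← hAs]
  ring

/-- The determinant identity for generalized companion matrices:
`det(z·I_k − B) = det(z·I_m − X)·(z^{k−m} − Σ_{j=1}^{k−m} c_j z^{j−1}) − aᵀ·adj(z·I_m − X)·b`,
as polynomials in `z`. -/
theorem genComp_charpoly (k m : ℕ) (hm1 : 1 ≤ m) (hm : m < k)
    (X : Matrix (Fin m) (Fin m) ℂ) (a b : Fin m → ℂ) (c : Fin (k - m) → ℂ) :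
    (genComp hm X a b c).charpoly =
      X.charpoly *
        (Polynomial.X ^ (k - m) -
          ∑ j : Fin (k - m), Polynomial.C (c j) * Polynomial.X ^ (j : ℕ)) -
      ∑ i : Fin m, ∑ j : Fin m,
        Polynomial.C (a i) * (Matrix.charmatrix X).adjugate i j * Polynomial.C (b j) := by
  have hk : m + (k - m) = k := by omega
  rw [genComp_eq_reindex hm X a b c hk, Matrix.charpoly_reindex]
  exact key m (k - m) (by omega) X a b c
end
end

section
/- Let B ∈ Matₙ(ℂ) and let p ∈ ℂ[z] be a polynomial such that the matrix p(B) is invertible. Then there exists a polynomial q ∈ ℂ[z] such that p(B) = exp(q(B)). In other words, every invertible element of the algebra ℂ[B] of polynomials in B is the exponential of an element of ℂ[B]. -/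
open Matrix Polynomial

noncomputable section

section AuxExp

open NormedSpace

set_option maxHeartbeats 1000000
set_option synthInstance.maxHeartbeats 400000


attribute [local instance] Matrix.linftyOpSemiNormedRing Matrix.linftyOpNormedRing
  Matrix.linftyOpNormedAlgebra

variable {n : ℕ} {B : Matrix (Fin n) (Fin n) ℂ}

def SB (n : ℕ) (B : Matrix (Fin n) (Fin n) ℂ) : Subalgebra ℂ (Matrix (Fin n) (Fin n) ℂ) :=
  (Polynomial.aeval B : Polynomial ℂ →ₐ[ℂ] _).range

instance : CompleteSpace ↥(SB n B) := by
  have : IsUniformAddGroup ↥(SB n B) := SeminormedAddCommGroup.to_isUniformAddGroup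
  exact FiniteDimensional.complete ℂ _

instance : IsTopologicalRing ↥(SB n B) := inferInstanceAs (IsTopologicalRing (SB n B).toSubring)
instance : NormedAlgebra ℚ ↥(SB n B) := NormedAlgebra.restrictScalars ℚ ℂ _

example : NormedRing ↥(SB n B) := inferInstance
example : NormedAlgebra ℂ ↥(SB n B) := inferInstance
example : PreconnectedSpace unitInterval := inferInstance

lemma SB_comm (x y : ↥(SB n B)) : Commute x y := by
  obtain ⟨qx, hqx⟩ := (AlgHom.mem_range _).mp x.2
  obtain ⟨qy, hqy⟩ := (AlgHom.mem_range _).mp y.2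
  have : (x : Matrix (Fin n) (Fin n) ℂ) * y = (y : Matrix (Fin n) (Fin n) ℂ) * x := by
    rw [← hqx, ← hqy, ← _root_.map_mul, ← _root_.map_mul, mul_comm]
  exact Subtype.ext this

lemma SB_isUnit {x : ↥(SB n B)} (hx : IsUnit (x : Matrix (Fin n) (Fin n) ℂ)) :
    IsUnit x := by
  have hinj : Function.Injective (LinearMap.mulLeft ℂ x : ↥(SB n B) →ₗ[ℂ] ↥(SB n B)) := by
    intro a b hab
    simp only [LinearMap.mulLeft_apply] at hab
    have h2 : (x : Matrix (Fin n) (Fin n) ℂ) * a = (x : Matrix (Fin n) (Fin n) ℂ) * b :=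
      congrArg Subtype.val hab
    exact Subtype.ext (hx.mul_left_cancel h2)
  obtain ⟨y, hy⟩ := (LinearMap.surjective_of_injective hinj) 1
  simp only [LinearMap.mulLeft_apply] at hy
  exact ⟨⟨x, y, hy, ((SB_comm x y).symm.eq).trans hy⟩, rfl⟩

lemma SB_exp_add (x y : ↥(SB n B)) : exp (x + y) = exp x * exp y :=
  NormedSpace.exp_add_of_commute (SB_comm x y)

lemma SB_exp_nhds : {u : ↥(SB n B) | ∃ l, exp l = u} ∈ nhds (1 : ↥(SB n B)) := by
  have h1 : HasStrictFDerivAt exp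
      ((ContinuousLinearEquiv.refl ℂ ↥(SB n B) :
        ↥(SB n B) ≃L[ℂ] ↥(SB n B)) : ↥(SB n B) →L[ℂ] ↥(SB n B)) 0 := by
    convert hasStrictFDerivAt_exp_zero (𝕂 := ℂ) (𝔸 := ↥(SB n B)) using 1 <;> rfl
  have h2 := h1.map_nhds_eq_of_equiv
  rw [NormedSpace.exp_zero] at h2
  rw [show nhds (1 : ↥(SB n B)) = _ from h2.symm]
  exact Filter.mem_map.mpr (Filter.univ_mem' fun l => ⟨l, rfl⟩)

lemma SB_key (n : ℕ) (B : Matrix (Fin n) (Fin n) ℂ)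
    (p : Polynomial ℂ) (h : IsUnit (aeval B p)) :
    ∃ l : ↥(SB n B), exp l = ⟨aeval B p, (AlgHom.mem_range _).mpr ⟨p, rfl⟩⟩ := by
  set a : Matrix (Fin n) (Fin n) ℂ := aeval B p with ha
  set aS : ↥(SB n B) := ⟨a, (AlgHom.mem_range _).mpr ⟨p, rfl⟩⟩ with haS
  set M : Matrix (Fin n) (Fin n) (Polynomial ℂ) :=
    Matrix.of fun i j => C ((1 : Matrix (Fin n) (Fin n) ℂ) i j) + C ((a - 1) i j) * X with hM
  set P : Polynomial ℂ := M.det with hP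
  have hPeval : ∀ z : ℂ, P.eval z = Matrix.det ((1 : Matrix (Fin n) (Fin n) ℂ) + z • (a - 1)) := by
    intro z
    have hmap : (M.map (eval z)) = (1 : Matrix (Fin n) (Fin n) ℂ) + z • (a - 1) := by
      ext i j
      simp [hM, Matrix.map_apply, Matrix.add_apply, Matrix.smul_apply, mul_comm]
    rw [← hmap]
    exact RingHom.map_det (evalRingHom z) M
  have hP0 : P.eval 0 = 1 := by rw [hPeval]; simp
  have hP1 : P.eval 1 ≠ 0 := by
    rw [hPeval]
    have h1a : (1 : Matrix (Fin n) (Fin n) ℂ) + (1 : ℂ) • (a - 1) = a := by simp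
    rw [h1a]
    have hdetu : IsUnit a.det := by simpa using h.map Matrix.detMonoidHom
    exact hdetu.ne_zero
  have hPne : P ≠ 0 := fun h0 => by simp [h0] at hP0
  have hZ : Set.Countable {z : ℂ | P.IsRoot z} :=
    (Polynomial.finite_setOf_isRoot hPne).countable
  have hrank : (1 : Cardinal) < Module.rank ℝ ℂ := by
    rw [Complex.rank_real_complex]; exact Cardinal.one_lt_two
  have hpc : IsPathConnected ({z : ℂ | P.IsRoot z}ᶜ) :=
    hZ.isPathConnected_compl_of_one_lt_rank hrank
  have h0mem : (0 : ℂ) ∈ {z : ℂ | P.IsRoot z}ᶜ := by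
    simp only [Set.mem_compl_iff, Set.mem_setOf_eq, Polynomial.IsRoot]
    rw [hP0]; exact one_ne_zero
  have h1mem : (1 : ℂ) ∈ {z : ℂ | P.IsRoot z}ᶜ := by
    simpa [Set.mem_compl_iff, Polynomial.IsRoot] using hP1
  obtain ⟨γ, hγ⟩ := hpc.joinedIn 0 h0mem 1 h1mem
  set f : unitInterval → ↥(SB n B) := fun t => 1 + γ t • (aS - 1) with hf
  have hfc : Continuous f := continuous_const.add (γ.continuous.smul continuous_const)
  have hfu : ∀ t, IsUnit (f t) := by
    intro t
    apply SB_isUnit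
    have hco : ((f t : Matrix (Fin n) (Fin n) ℂ))
        = (1 : Matrix (Fin n) (Fin n) ℂ) + γ t • (a - 1) := by
      show ((1 + γ t • (aS - 1) : ↥(SB n B)) : Matrix (Fin n) (Fin n) ℂ) = _
      push_cast
      rfl
    have hdet : ((f t : Matrix (Fin n) (Fin n) ℂ)).det ≠ 0 := by
      rw [hco, ← hPeval]
      exact hγ t
    exact (Matrix.isUnit_iff_isUnit_det _).mpr (isUnit_iff_ne_zero.mpr hdet)
  set T : Set unitInterval := {t | ∃ l, exp l = f t} with hT
  have hnbhd : ∀ t₀ : unitInterval, ∀ᶠ t in nhds t₀, (t ∈ T ↔ t₀ ∈ T) := by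
    intro t₀
    obtain ⟨u, hu⟩ := hfu t₀
    have hg : Continuous fun t => f t * ↑u⁻¹ := hfc.mul continuous_const
    have hg0 : f t₀ * ↑u⁻¹ = 1 := by rw [← hu, u.mul_inv]
    have hmem : ∀ᶠ t in nhds t₀, ∃ m, exp m = f t * ↑u⁻¹ := by
      have := hg.continuousAt (x := t₀)
      rw [ContinuousAt, hg0] at this
      exact this (SB_exp_nhds)
    filter_upwards [hmem] with t hm
    obtain ⟨m, hm⟩ := hm
    have hft : exp m * f t₀ = f t := by
      rw [← hu, hm, Units.inv_mul_cancel_right]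
    constructor
    · rintro ⟨l, hl⟩
      refine ⟨-m + l, ?_⟩
      rw [SB_exp_add _ _, hl, ← hft, ← mul_assoc,
        ← SB_exp_add _ _, neg_add_cancel, exp_zero, one_mul]
    · rintro ⟨l, hl⟩
      exact ⟨m + l, by rw [SB_exp_add _ _, hl, hft]⟩
  have hTopen : IsOpen T := by
    rw [isOpen_iff_mem_nhds]
    intro t ht
    exact ((hnbhd t).mono fun s hs => hs.mpr ht)
  have hTclosed : IsClosed T := by
    rw [← isOpen_compl_iff, isOpen_iff_mem_nhds]
    intro t ht
    exact ((hnbhd t).mono fun s hs h' => ht (hs.mp h'))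
  have h0T : (0 : unitInterval) ∈ T := by
    refine ⟨0, ?_⟩
    rw [exp_zero, hf]
    simp [γ.source]
  have hTuniv : T = Set.univ := IsClopen.eq_univ ⟨hTclosed, hTopen⟩ ⟨0, h0T⟩
  have h1T : (1 : unitInterval) ∈ T := hTuniv ▸ Set.mem_univ _
  obtain ⟨l, hl⟩ := h1T
  refine ⟨l, ?_⟩
  rw [hl, hf]
  simp [γ.target]

end AuxExp

set_option maxHeartbeats 1000000 in
set_option synthInstance.maxHeartbeats 400000 in
/-- Every invertible element of the algebra `ℂ[B]` of polynomials in a matrix `B` is the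
exponential of an element of `ℂ[B]`. -/
theorem isUnit_aeval_eq_exp_aeval (n : ℕ) (B : Matrix (Fin n) (Fin n) ℂ)
    (p : Polynomial ℂ) (h : IsUnit (aeval B p)) :
    ∃ q : Polynomial ℂ, aeval B p = NormedSpace.exp (aeval B q) := by
  letI : SeminormedRing (Matrix (Fin n) (Fin n) ℂ) := Matrix.linftyOpSemiNormedRing
  letI : NormedRing (Matrix (Fin n) (Fin n) ℂ) := Matrix.linftyOpNormedRing
  letI : NormedAlgebra ℂ (Matrix (Fin n) (Fin n) ℂ) := Matrix.linftyOpNormedAlgebra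
  obtain ⟨l, hl⟩ := SB_key n B p h
  obtain ⟨q, hq⟩ := (AlgHom.mem_range _).mp l.2
  refine ⟨q, ?_⟩
  have hmap' : ((NormedSpace.exp l : ↥(SB n B)) : Matrix (Fin n) (Fin n) ℂ)
      = NormedSpace.exp ((l : Matrix (Fin n) (Fin n) ℂ)) :=
    NormedSpace.map_exp ((SB n B).val) continuous_subtype_val l
  have key2 : aeval B p = NormedSpace.exp ((l : Matrix (Fin n) (Fin n) ℂ)) := by
    rw [← hmap', hl]
  rw [← hq] at key2
  exact key2
end
end

section
/- Let B ∈ Matₙ(ℂ) and suppose b ∈ ℂⁿ is cyclic for B. Then a vector b′ ∈ ℂⁿ is cyclic for B if and only if there exists a polynomial q ∈ ℂ[z] with b′ = exp(q(B))·b. (Thus the set of cyclic vectors of a fixed B is a single orbit of the group {exp(q(B)) : q ∈ ℂ[z]}; this is the set-theoretic content of the statement that the symplectic quotients of V_n by the subgroup C_n of the Gelfand–Zeitlin group are exactly the regular adjoint orbits.) -/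
set_option maxRecDepth 8000
set_option maxHeartbeats 1000000

open Matrix

noncomputable section

/-- The Krylov matrix of `(B, b)`, whose columns are `b, Bb, …, B^{n−1}b`. -/
def krylov {n : ℕ} (B : Matrix (Fin n) (Fin n) ℂ) (b : Fin n → ℂ) :
    Matrix (Fin n) (Fin n) ℂ :=
  fun i j => (B ^ (j : ℕ) *ᵥ b) i

/-- `b` is a cyclic vector for `B` if `b, Bb, …, B^{n−1}b` form a basis of `ℂⁿ`. -/
def IsCyclic' {n : ℕ} (B : Matrix (Fin n) (Fin n) ℂ) (b : Fin n → ℂ) : Prop :=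
  IsUnit (krylov B b)

/-- `V_n`, the set of pairs `(B, b)` with `b` cyclic for `B`. -/
def Vn (n : ℕ) : Set (Matrix (Fin n) (Fin n) ℂ × (Fin n → ℂ)) :=
  {p | IsCyclic' p.1 p.2}

open Polynomial

namespace CyclicOrbitAux


/-- truncated logarithm series `∑_{1≤j<m} (-1)^(j+1)/j · X^j`. -/
def trL (m : ℕ) : ℂ[X] := ∑ j ∈ Finset.Ico 1 m, C ((-1) ^ (j + 1) / (j : ℂ)) * X ^ j

/-- truncated exponential of the truncated logarithm. -/
def trF (m : ℕ) : ℂ[X] := ∑ k ∈ Finset.range m, C ((k.factorial : ℂ))⁻¹ * trL m ^ k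

lemma X_dvd_trL (m : ℕ) : (X : ℂ[X]) ∣ trL m := by
  refine Finset.dvd_sum fun j hj => ?_
  have hj1 : j ≠ 0 := by simp [Finset.mem_Ico] at hj; omega
  exact Dvd.dvd.mul_left (dvd_pow_self X hj1) _

lemma deriv_trL (m : ℕ) :
    derivative (trL m) = ∑ i ∈ Finset.range (m - 1), (-X : ℂ[X]) ^ i := by
  rw [trL, derivative_sum, Finset.sum_Ico_eq_sum_range]
  refine Finset.sum_congr rfl fun i _ => ?_
  rw [derivative_C_mul_X_pow]
  have h1 : ((1 + i : ℕ) : ℂ) ≠ 0 := Nat.cast_ne_zero.mpr (by omega)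
  have h2 : (-1 : ℂ) ^ (1 + i + 1) / ((1 + i : ℕ) : ℂ) * ((1 + i : ℕ) : ℂ) = (-1) ^ i := by
    rw [div_mul_cancel₀ _ h1]
    rw [show 1 + i + 1 = i + 2 by omega, pow_add]
    norm_num
  rw [show ((1 + i : ℕ) : ℂ) = ((1+i : ℕ) : ℂ) from rfl]
  push_cast
  rw [show (1 : ℂ) + i = ((1 + i : ℕ) : ℂ) by push_cast; ring] at *
  rw [h2, show 1 + i - 1 = i by omega]
  rw [map_pow, map_neg, C_1, ← mul_pow, neg_one_mul]

lemma geom_trL (m : ℕ) :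
    (1 + X) * derivative (trL m) = 1 - (-X : ℂ[X]) ^ (m - 1) := by
  rw [deriv_trL]
  linear_combination (-1 : ℂ[X]) * geom_sum_mul (-X : ℂ[X]) (m - 1)


lemma deriv_trF (m : ℕ) :
    derivative (trF (m + 1)) =
      (trF (m + 1) - C ((m.factorial : ℂ))⁻¹ * trL (m + 1) ^ m) * derivative (trL (m + 1)) := by
  have hpeel : trF (m + 1) - C ((m.factorial : ℂ))⁻¹ * trL (m + 1) ^ m
      = ∑ k ∈ Finset.range m, C ((k.factorial : ℂ))⁻¹ * trL (m + 1) ^ k := by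
    rw [trF, Finset.sum_range_succ]; ring
  rw [hpeel, Finset.sum_mul, trF, derivative_sum, Finset.sum_range_succ' _ m]
  have h0 : derivative (C (((0:ℕ).factorial : ℂ))⁻¹ * trL (m+1) ^ 0) = 0 := by
    simp
  rw [h0, add_zero]
  refine Finset.sum_congr rfl fun k _ => ?_
  rw [derivative_mul, derivative_C, zero_mul, zero_add, derivative_pow]
  have hfac : (((k+1).factorial : ℂ))⁻¹ * ((k+1 : ℕ) : ℂ) = ((k.factorial : ℂ))⁻¹ := by
    rw [Nat.factorial_succ]
    push_cast
    have h1 : ((k+1:ℕ):ℂ) ≠ 0 := Nat.cast_ne_zero.mpr (Nat.succ_ne_zero k)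
    push_cast at h1
    have h2 : (k.factorial : ℂ) ≠ 0 := Nat.cast_ne_zero.mpr k.factorial_ne_zero
    field_simp
  rw [show k + 1 - 1 = k from rfl, ← mul_assoc, ← mul_assoc, ← C_mul, hfac]

lemma key_dvd_trF (m : ℕ) :
    (X : ℂ[X]) ^ m ∣ (1 + X) * derivative (trF (m + 1)) - trF (m + 1) := by
  have hX : (X : ℂ[X]) ^ m ∣ trL (m+1) ^ m := pow_dvd_pow_of_dvd (X_dvd_trL _) m
  have hgeom := geom_trL (m + 1)
  rw [show m + 1 - 1 = m by omega] at hgeom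
  have e1 : (1 + X) * derivative (trF (m + 1)) - trF (m + 1)
      = -(C ((m.factorial : ℂ))⁻¹ * trL (m+1) ^ m)
        - (trF (m + 1) - C ((m.factorial : ℂ))⁻¹ * trL (m+1) ^ m) * (-X) ^ m := by
    rw [deriv_trF]
    linear_combination (trF (m + 1) - C ((m.factorial : ℂ))⁻¹ * trL (m+1) ^ m) * hgeom
  rw [e1]
  have h2 : (X : ℂ[X]) ^ m ∣ (-X : ℂ[X]) ^ m := by
    rw [neg_pow]; exact dvd_rfl.mul_left _
  exact dvd_sub (dvd_neg.mpr (hX.mul_left _)) (h2.mul_left _)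

lemma coeff_zero_trF (m : ℕ) : (trF (m + 1)).coeff 0 = 1 := by
  rw [Polynomial.coeff_zero_eq_eval_zero, trF, eval_finset_sum]
  obtain ⟨t, ht⟩ := X_dvd_trL (m + 1)
  have hL0 : (trL (m+1)).eval 0 = 0 := by rw [ht]; simp
  rw [Finset.sum_eq_single_of_mem 0 (Finset.mem_range.mpr (Nat.succ_pos m))]
  · simp
  · intro k _ hk
    rw [eval_mul, eval_pow, hL0, zero_pow hk, mul_zero]

theorem trunc_exp_log (m : ℕ) : (X : ℂ[X]) ^ m ∣ trF m - (1 + X) := by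
  rcases m with _ | m
  · simpa using one_dvd _
  set G : ℂ[X] := trF (m + 1) - (1 + X) with hG
  have hkey : (X : ℂ[X]) ^ m ∣ (1 + X) * derivative G - G := by
    have : (1 + X) * derivative G - G = (1 + X) * derivative (trF (m + 1)) - trF (m + 1) := by
      rw [hG]
      have : derivative (1 + X : ℂ[X]) = 1 := by simp
      rw [derivative_sub, this]
      ring
    rw [this]
    exact key_dvd_trF m
  have hcoeff : ∀ e, e < m → ((1 + X) * derivative G - G).coeff e = 0 := fun e he =>
    Polynomial.X_pow_dvd_iff.mp hkey e he
  have hg0 : G.coeff 0 = 0 := by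
    rw [hG, Polynomial.coeff_sub, coeff_zero_trF]
    simp
  have hrec : ∀ d, d ≤ m → G.coeff d = 0 := by
    intro d
    induction d with
    | zero => intro _; exact hg0
    | succ e ih =>
      intro hle
      have he : e < m := by omega
      have hid := hcoeff e he
      have hge : G.coeff e = 0 := ih (by omega)
      have hXd : ((X : ℂ[X]) * derivative G).coeff e = e * G.coeff e := by
        rcases e with _ | e'
        · simp
        · rw [Polynomial.coeff_X_mul, Polynomial.coeff_derivative]
          push_cast
          ring
      rw [Polynomial.coeff_sub, add_mul, one_mul, Polynomial.coeff_add, hXd,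
        Polynomial.coeff_derivative, hge, mul_zero, add_zero, sub_zero] at hid
      have hne : ((e : ℂ) + 1) ≠ 0 := by
        have h1 : ((e+1:ℕ):ℂ) ≠ 0 := Nat.cast_ne_zero.mpr (Nat.succ_ne_zero e)
        push_cast at h1
        exact h1
      have := mul_eq_zero.mp hid
      rcases this with h | h
      · exact h
      · exact absurd h hne
  rw [Polynomial.X_pow_dvd_iff]
  intro d hd
  exact hrec d (by omega)



/-- Chinese remainder construction for powers of distinct linear factors. -/
lemma crt (S : Finset ℂ) (N : ℕ) (f : ℂ → ℂ[X]) :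
    ∃ q : ℂ[X], ∀ μ ∈ S, (X - C μ) ^ N ∣ q - f μ := by
  classical
  induction S using Finset.induction with
  | empty => exact ⟨0, by simp⟩
  | @insert a s ha ih =>
    obtain ⟨q', hq'⟩ := ih
    have hcop : IsCoprime ((X - C a) ^ N) (∏ μ ∈ s, (X - C μ) ^ N) := by
      refine IsCoprime.prod_right fun μ hμ => IsCoprime.pow ?_
      exact isCoprime_X_sub_C_of_isUnit_sub (by
        apply IsUnit.of_mul_eq_one (a - μ)⁻¹
        rw [mul_inv_cancel₀ (sub_ne_zero.mpr (by rintro rfl; exact ha hμ))])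
    obtain ⟨u, v, huv⟩ := hcop
    set M : ℂ[X] := ∏ μ ∈ s, (X - C μ) ^ N with hM
    refine ⟨f a * (v * M) + q' * (u * (X - C a) ^ N), ?_⟩
    intro μ hμ
    rcases Finset.mem_insert.mp hμ with rfl | hμs
    · have : f μ * (v * M) + q' * (u * (X - C μ) ^ N) - f μ
          = (q' - f μ) * u * (X - C μ) ^ N := by
        linear_combination (f μ) * huv
      rw [this]
      exact Dvd.intro_left _ rfl
    · have hdvdM : (X - C μ) ^ N ∣ M := Finset.dvd_prod_of_mem _ hμs
      have : f a * (v * M) + q' * (u * (X - C a) ^ N) - f μ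
          = (q' - f μ) + (f a - q') * v * M := by
        linear_combination q' * huv
      rw [this]
      exact dvd_add (hq' μ hμs) (hdvdM.mul_left _)



variable {n : ℕ}

/-- If `(M - c•1)^n` kills `v`, then `exp M *ᵥ v` is given by a finite sum. -/
lemma exp_mulVec_eq (M : Matrix (Fin n) (Fin n) ℂ) (c : ℂ) (v : Fin n → ℂ)
    (hv : ((M - c • 1) ^ n) *ᵥ v = 0) :
    NormedSpace.exp M *ᵥ v =
      Complex.exp c • ∑ k ∈ Finset.range n,
        ((k.factorial : ℂ))⁻¹ • (((M - c • 1) ^ k) *ᵥ v) := by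
  letI : SeminormedRing (Matrix (Fin n) (Fin n) ℂ) := Matrix.linftyOpSemiNormedRing
  letI : NormedRing (Matrix (Fin n) (Fin n) ℂ) := Matrix.linftyOpNormedRing
  letI : NormedAlgebra ℂ (Matrix (Fin n) (Fin n) ℂ) := Matrix.linftyOpNormedAlgebra
  set N : Matrix (Fin n) (Fin n) ℂ := M - c • 1 with hN
  have hM : M = c • 1 + N := by rw [hN]; abel
  have hcomm : Commute (c • (1 : Matrix (Fin n) (Fin n) ℂ)) N :=
    (Commute.one_left N).smul_left c
  have hsplit : NormedSpace.exp M =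
      NormedSpace.exp (c • 1) * NormedSpace.exp N := by
    rw [hM]; exact Matrix.exp_add_of_commute _ _ hcomm
  have hscal : NormedSpace.exp (c • (1 : Matrix (Fin n) (Fin n) ℂ))
      = Complex.exp c • 1 := by
    have h1 : c • (1 : Matrix (Fin n) (Fin n) ℂ)
        = algebraMap ℂ (Matrix (Fin n) (Fin n) ℂ) c := (Algebra.algebraMap_eq_smul_one c).symm
    rw [h1]
    have h2 := (NormedSpace.algebraMap_exp_comm (𝕂 := ℂ) (𝔸 := Matrix (Fin n) (Fin n) ℂ) c).symm
    rw [← Complex.exp_eq_exp_ℂ, Algebra.algebraMap_eq_smul_one (Complex.exp c)] at h2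
    exact h2
  -- the linear map `A ↦ A *ᵥ v`, as a continuous linear map
  let φ : Matrix (Fin n) (Fin n) ℂ →ₗ[ℂ] (Fin n → ℂ) :=
    { toFun := fun A => A *ᵥ v
      map_add' := fun A B => Matrix.add_mulVec A B v
      map_smul' := fun r A => Matrix.smul_mulVec r A v }
  let φc : Matrix (Fin n) (Fin n) ℂ →L[ℂ] (Fin n → ℂ) := LinearMap.toContinuousLinearMap φ
  have hφ : ∀ A : Matrix (Fin n) (Fin n) ℂ, φc A = A *ᵥ v := fun A => rfl
  have hsum : Summable fun k : ℕ => ((k.factorial : ℂ))⁻¹ • N ^ k :=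
    NormedSpace.expSeries_summable' N
  have hexpN : NormedSpace.exp N *ᵥ v
      = ∑' k : ℕ, ((k.factorial : ℂ))⁻¹ • (N ^ k *ᵥ v) := by
    rw [← hφ, NormedSpace.exp_eq_tsum ℂ, φc.map_tsum hsum]
    exact tsum_congr fun k => by rw [hφ]; exact Matrix.smul_mulVec _ _ _
  have hvanish : ∀ k ∉ Finset.range n, ((k.factorial : ℂ))⁻¹ • (N ^ k *ᵥ v) = 0 := by
    intro k hk
    rw [Finset.mem_range, not_lt] at hk
    have : N ^ k = N ^ (k - n) * N ^ n := by rw [← pow_add]; congr 1; omega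
    rw [this, ← Matrix.mulVec_mulVec, hv, Matrix.mulVec_zero, smul_zero]
  have hfin : NormedSpace.exp N *ᵥ v
      = ∑ k ∈ Finset.range n, ((k.factorial : ℂ))⁻¹ • (N ^ k *ᵥ v) := by
    rw [hexpN]; exact tsum_eq_sum hvanish
  rw [hsplit, hscal, smul_mul_assoc, one_mul, Matrix.smul_mulVec, hfin]


lemma key_dvd (n : ℕ) (hn : 1 ≤ n) (p q : ℂ[X]) (μ : ℂ) (ha : p.eval μ ≠ 0)
    (hq : (X - C μ) ^ n ∣ q - (C (Complex.log (p.eval μ)) +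
      ∑ j ∈ Finset.Ico 1 n, C ((-1) ^ (j + 1) / (j : ℂ)) * (C (p.eval μ)⁻¹ * p - 1) ^ j)) :
    (X - C μ) ^ n ∣
      (C (Complex.exp (q.eval μ)) * ∑ k ∈ Finset.range n, C ((k.factorial : ℂ))⁻¹ *
        (q - C (q.eval μ)) ^ k) - p := by
  set a := p.eval μ with hadef
  set w : ℂ[X] := C a⁻¹ * p - 1 with hw
  set Lw : ℂ[X] := ∑ j ∈ Finset.Ico 1 n, C ((-1) ^ (j + 1) / (j : ℂ)) * w ^ j with hLw
  have hLw' : aeval w (trL n) = Lw := by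
    rw [trL, map_sum, hLw]
    refine Finset.sum_congr rfl fun j _ => ?_
    rw [_root_.map_mul, map_pow, aeval_X, aeval_C, Polynomial.algebraMap_eq]
  have hweval : w.eval μ = 0 := by
    rw [hw]
    simp only [eval_sub, eval_mul, eval_C, eval_one]
    rw [inv_mul_cancel₀ ha, sub_self]
  have hXw : (X - C μ) ∣ w := dvd_iff_isRoot.mpr hweval
  have hLweval : Lw.eval μ = 0 := by
    rw [hLw, eval_finset_sum]
    refine Finset.sum_eq_zero fun j hj => ?_
    have hj0 : j ≠ 0 := by simp only [Finset.mem_Ico] at hj; omega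
    rw [eval_mul, eval_pow, hweval, zero_pow hj0, mul_zero]
  have hqev : q.eval μ = Complex.log a := by
    obtain ⟨t, ht⟩ := hq
    have hq' : q = (C (Complex.log a) + Lw) + (X - C μ) ^ n * t := by linear_combination ht
    rw [hq']
    simp only [eval_add, eval_mul, eval_pow, eval_sub, eval_X, eval_C, hLweval, sub_self]
    rw [zero_pow (by omega : n ≠ 0)]
    ring
  have hexp : Complex.exp (q.eval μ) = a := by rw [hqev]; exact Complex.exp_log ha
  have hqL : (X - C μ) ^ n ∣ (q - C (q.eval μ)) - Lw := by
    have h : (q - C (q.eval μ)) - Lw = q - (C (Complex.log a) + Lw) := by rw [hqev]; ring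
    rw [h]; exact hq
  have hpow : ∀ k, (X - C μ) ^ n ∣ (q - C (q.eval μ)) ^ k - Lw ^ k :=
    fun k => dvd_trans hqL (sub_dvd_pow_sub_pow _ _ k)
  have hFw : aeval w (trF n) = ∑ k ∈ Finset.range n, C ((k.factorial : ℂ))⁻¹ * Lw ^ k := by
    rw [trF, map_sum]
    refine Finset.sum_congr rfl fun k _ => ?_
    rw [_root_.map_mul, map_pow, aeval_C, Polynomial.algebraMap_eq, hLw']
  have h4 : (X - C μ) ^ n ∣
      (∑ k ∈ Finset.range n, C ((k.factorial : ℂ))⁻¹ * (q - C (q.eval μ)) ^ k)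
        - aeval w (trF n) := by
    rw [hFw, ← Finset.sum_sub_distrib]
    refine Finset.dvd_sum fun k _ => ?_
    have h := (hpow k).mul_left (C ((k.factorial : ℂ))⁻¹)
    rw [mul_sub] at h
    exact h
  have h1 : (X - C μ) ^ n ∣ aeval w (trF n) - (1 + w) := by
    have h := map_dvd (aeval w) (trunc_exp_log n)
    rw [map_pow, aeval_X, map_sub, map_add, _root_.map_one, aeval_X] at h
    exact dvd_trans (pow_dvd_pow_of_dvd hXw n) h
  have hCa : C a * (1 + w) = p := by
    have hCinv : C a * C a⁻¹ = 1 := by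
      rw [← C_mul, mul_inv_cancel₀ ha, C_1]
    rw [hw]
    linear_combination p * hCinv
  rw [hexp]
  obtain ⟨t4, e4⟩ := h4
  obtain ⟨t1, e1⟩ := h1
  exact ⟨C a * t4 + C a * t1, by linear_combination C a * e4 + C a * e1 + hCa⟩

lemma sum_mulVec {n : ℕ} {α : Type*} (s : Finset α) (f : α → Matrix (Fin n) (Fin n) ℂ)
    (v : Fin n → ℂ) : (∑ a ∈ s, f a) *ᵥ v = ∑ a ∈ s, f a *ᵥ v := by
  classical
  induction s using Finset.induction with
  | empty => simp
  | @insert a t ha ih =>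
    rw [Finset.sum_insert ha, Finset.sum_insert ha, Matrix.add_mulVec, ih]

lemma commute_aeval {n : ℕ} (B : Matrix (Fin n) (Fin n) ℂ) (r : ℂ[X]) :
    Commute (aeval B r) B := by
  show aeval B r * B = B * aeval B r
  calc aeval B r * B = aeval B (r * X) := by rw [_root_.map_mul, aeval_X]
    _ = aeval B (X * r) := by rw [mul_comm]
    _ = B * aeval B r := by rw [_root_.map_mul, aeval_X]

theorem exists_exp_eq {n : ℕ} (hn : 1 ≤ n) (B : Matrix (Fin n) (Fin n) ℂ) (p : ℂ[X])
    (hp : IsUnit (aeval B p)) :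
    ∃ q : ℂ[X], NormedSpace.exp (aeval B q) = aeval B p := by
  classical
  set f : Module.End ℂ (Fin n → ℂ) := Matrix.toLinAlgEquiv' B with hf
  have hmp0 : minpoly ℂ f ≠ 0 := minpoly.ne_zero (LinearMap.isIntegral f)
  set S : Finset ℂ := (minpoly ℂ f).roots.toFinset with hS
  have hSeig : ∀ μ : ℂ, f.HasEigenvalue μ → μ ∈ S := by
    intro μ h
    exact Multiset.mem_toFinset.mpr
      (Polynomial.mem_roots'.mpr ⟨hmp0, Module.End.hasEigenvalue_iff_isRoot.mp h⟩)
  have hpS : ∀ μ ∈ S, p.eval μ ≠ 0 := by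
    intro μ hμ h0
    have heig : f.HasEigenvalue μ :=
      Module.End.hasEigenvalue_iff_isRoot.mpr
        (Polynomial.mem_roots'.mp (Multiset.mem_toFinset.mp hμ)).2
    have hspec : μ ∈ spectrum ℂ B := by
      have h1 : μ ∈ spectrum ℂ f := Module.End.hasEigenvalue_iff_mem_spectrum.mp heig
      rwa [hf, AlgEquiv.spectrum_eq Matrix.toLinAlgEquiv' B] at h1
    have h2 : (0 : ℂ) ∈ spectrum ℂ (aeval B p) :=
      spectrum.subset_polynomial_aeval B p ⟨μ, hspec, h0⟩
    exact (spectrum.zero_mem_iff (R := ℂ)).mp h2 hp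
  obtain ⟨q, hq⟩ := crt S n (fun μ => C (Complex.log (p.eval μ)) +
      ∑ j ∈ Finset.Ico 1 n, C ((-1) ^ (j + 1) / (j : ℂ)) * (C (p.eval μ)⁻¹ * p - 1) ^ j)
  refine ⟨q, ?_⟩
  have key : ∀ μ ∈ S, (X - C μ) ^ n ∣
      (C (Complex.exp (q.eval μ)) * ∑ k ∈ Finset.range n, C ((k.factorial : ℂ))⁻¹ *
        (q - C (q.eval μ)) ^ k) - p :=
    fun μ hμ => key_dvd n hn p q μ (hpS μ hμ) (hq μ hμ)
  apply Matrix.toLinAlgEquiv'.injective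
  apply LinearMap.ext
  intro v
  have hv : v ∈ ⨆ μ : ℂ, f.maxGenEigenspace μ := by
    rw [Module.End.iSup_maxGenEigenspace_eq_top f]; exact Submodule.mem_top
  rw [Matrix.toLinAlgEquiv'_apply, Matrix.toLinAlgEquiv'_apply]
  refine Submodule.iSup_induction (motive := fun w => NormedSpace.exp (aeval B q) *ᵥ w = (aeval B p) *ᵥ w) _ hv ?_ ?_ ?_
  · -- generalized eigenvectors
    intro μ v hvμ
    rcases eq_or_ne v 0 with rfl | hv0
    · simp
    · have hgen : f.HasGenEigenvalue μ (Module.finrank ℂ (Fin n → ℂ)) := by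
        rw [Module.End.hasGenEigenvalue_iff]
        refine (Submodule.ne_bot_iff _).mpr ⟨v, ?_, hv0⟩
        rwa [← Module.End.maxGenEigenspace_eq_genEigenspace_finrank]
      have heig : f.HasEigenvalue μ := Module.End.hasEigenvalue_of_hasGenEigenvalue hgen
      have hμS : μ ∈ S := hSeig μ heig
      have hfin : Module.finrank ℂ (Fin n → ℂ) = n := Module.finrank_fin_fun ℂ
      have hvn : ((f - μ • 1) ^ n) v = 0 := by
        have h1 : v ∈ f.genEigenspace μ (Module.finrank ℂ (Fin n → ℂ) : ℕ) := by
          rw [← Module.End.maxGenEigenspace_eq_genEigenspace_finrank]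
          exact hvμ
        have h2 := LinearMap.mem_ker.mp (Module.End.mem_genEigenspace_nat.mp h1)
        rwa [hfin] at h2
      have hvnM : ((B - μ • 1) ^ n) *ᵥ v = 0 := by
        have hEq : Matrix.toLinAlgEquiv' ((B - μ • 1) ^ n) = (f - μ • 1) ^ n := by
          rw [map_pow, map_sub, hf]
          congr 1
          rw [_root_.map_smul, _root_.map_one]
        calc ((B - μ • 1) ^ n) *ᵥ v = Matrix.toLinAlgEquiv' ((B - μ • 1) ^ n) v :=
              (Matrix.toLinAlgEquiv'_apply _ _).symm
          _ = 0 := by rw [hEq, hvn]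
      set c : ℂ := q.eval μ with hc
      have hdvd1 : (X - C μ) ∣ (q - C c) :=
        dvd_iff_isRoot.mpr (by simp [IsRoot, eval_sub, eval_C, hc])
      have hBX : aeval B (X - C μ) = B - μ • 1 := by
        rw [map_sub, aeval_X, aeval_C, Algebra.algebraMap_eq_smul_one]
      have haev : aeval B q - c • 1 = aeval B (q - C c) := by
        rw [map_sub, aeval_C, Algebra.algebraMap_eq_smul_one]
      obtain ⟨t, ht⟩ := pow_dvd_pow_of_dvd hdvd1 n
      have hnil : ((aeval B q - c • 1) ^ n) *ᵥ v = 0 := by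
        rw [haev, ← map_pow, ht, mul_comm, _root_.map_mul, map_pow, hBX,
          ← Matrix.mulVec_mulVec, hvnM, Matrix.mulVec_zero]
      have hexpv := exp_mulVec_eq (aeval B q) c v hnil
      have hE : (aeval B (C (Complex.exp c) * ∑ k ∈ Finset.range n,
          C ((k.factorial : ℂ))⁻¹ * (q - C c) ^ k)) *ᵥ v
          = Complex.exp c • ∑ k ∈ Finset.range n,
              ((k.factorial : ℂ))⁻¹ • (((aeval B q - c • 1) ^ k) *ᵥ v) := by
        rw [_root_.map_mul, aeval_C, Algebra.algebraMap_eq_smul_one, smul_mul_assoc, one_mul,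
          Matrix.smul_mulVec, map_sum, sum_mulVec]
        congr 1
        refine Finset.sum_congr rfl fun k _ => ?_
        rw [_root_.map_mul, aeval_C, Algebra.algebraMap_eq_smul_one, map_pow, ← haev,
          smul_mul_assoc, one_mul, Matrix.smul_mulVec]
      obtain ⟨s, hs⟩ := key μ hμS
      have hfinal : (aeval B (C (Complex.exp c) * ∑ k ∈ Finset.range n,
          C ((k.factorial : ℂ))⁻¹ * (q - C c) ^ k)) *ᵥ v = (aeval B p) *ᵥ v := by
        rw [← sub_eq_zero, ← Matrix.sub_mulVec, ← map_sub, hs, mul_comm, _root_.map_mul,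
          map_pow, hBX, ← Matrix.mulVec_mulVec, hvnM, Matrix.mulVec_zero]
      rw [hexpv, ← hE, hfinal]
  · simp
  · intro x y hx hy
    rw [Matrix.mulVec_add, Matrix.mulVec_add, hx, hy]

end CyclicOrbitAux

/-- If `b` is cyclic for `B`, then `b'` is cyclic for `B` iff `b' = exp(q(B))·b` for some
polynomial `q`: the cyclic vectors of `B` form a single orbit of `{exp(q(B)) : q ∈ ℂ[z]}`. -/
theorem cyclic_vectors_single_exp_orbit (n : ℕ) (hn : 1 ≤ n)
    (B : Matrix (Fin n) (Fin n) ℂ) (b : Fin n → ℂ) (hb : IsCyclic' B b)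
    (b' : Fin n → ℂ) :
    IsCyclic' B b' ↔ ∃ q : Polynomial ℂ, b' = NormedSpace.exp (aeval B q) *ᵥ b := by
  classical
  have hdet : IsUnit (krylov B b).det := (Matrix.isUnit_iff_isUnit_det _).mp hb
  have hkry : ∀ M : Matrix (Fin n) (Fin n) ℂ, Commute M B →
      krylov B (M *ᵥ b) = M * krylov B b := by
    intro M hM
    funext i j
    show (B ^ (j : ℕ) *ᵥ (M *ᵥ b)) i = (M * krylov B b) i j
    rw [Matrix.mulVec_mulVec, ((hM.pow_right (j : ℕ)).symm).eq, ← Matrix.mulVec_mulVec]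
    simp [Matrix.mulVec, Matrix.mul_apply, dotProduct, krylov]
  constructor
  · intro hb'
    set c : Fin n → ℂ := (krylov B b)⁻¹ *ᵥ b' with hc
    have hbc : krylov B b *ᵥ c = b' := by
      rw [hc, Matrix.mulVec_mulVec, Matrix.mul_nonsing_inv _ hdet, Matrix.one_mulVec]
    set p : ℂ[X] := ∑ j : Fin n, C (c j) * X ^ (j : ℕ) with hp
    have hpb : aeval B p *ᵥ b = krylov B b *ᵥ c := by
      rw [hp, map_sum, CyclicOrbitAux.sum_mulVec]
      have hterm : ∀ j : Fin n, (aeval B (C (c j) * X ^ (j : ℕ))) *ᵥ b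
          = c j • (B ^ (j : ℕ) *ᵥ b) := by
        intro j
        rw [_root_.map_mul, aeval_C, Algebra.algebraMap_eq_smul_one, map_pow, aeval_X,
          smul_mul_assoc, one_mul, Matrix.smul_mulVec]
      funext i
      rw [Finset.sum_apply]
      simp_rw [hterm]
      simp [Matrix.mulVec, dotProduct, krylov, mul_comm]
    have hb'eq : b' = aeval B p *ᵥ b := by rw [hpb, hbc]
    have hpu : IsUnit (aeval B p) := by
      have hk' : krylov B b' = aeval B p * krylov B b := by
        rw [hb'eq]; exact hkry _ (CyclicOrbitAux.commute_aeval B p)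
      have hdet' : IsUnit (krylov B b').det := (Matrix.isUnit_iff_isUnit_det _).mp hb'
      rw [hk', Matrix.det_mul] at hdet'
      exact (Matrix.isUnit_iff_isUnit_det _).mpr (isUnit_of_mul_isUnit_left hdet')
    obtain ⟨q, hqe⟩ := CyclicOrbitAux.exists_exp_eq hn B p hpu
    exact ⟨q, by rw [hqe, ← hb'eq]⟩
  · rintro ⟨q, rfl⟩
    have hE : IsUnit (NormedSpace.exp (aeval B q)) := Matrix.isUnit_exp (aeval B q)
    have hcomm : Commute (NormedSpace.exp (aeval B q)) B :=
      (CyclicOrbitAux.commute_aeval B q).exp_left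
    unfold IsCyclic'
    rw [hkry _ hcomm]
    exact hE.mul hb
end
end
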